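/- arXiv:2405.13986 — 2 statements merged into one kernel-verified Lean document; each statement's English description precedes it below -/
import Mathlib

section
/- For a function u : ℝ² → ℝ that is C⁶ in a neighborhood of (x,y), the 9-point Mehrstellen box stencil satisfies (1/(6h²))·(20·u(x,y) − 4·(u(x±h,y)+u(x,y±h)) − (u(x±h,y±h))) = −Δu(x,y) − (h²/12)·Δ²u(x,y) + O(h⁴), where Δ² denotes the biharmonic operator. -/
open Set Metric Filter Topology
open scoped Nat

/-- On a set with unique differentiability, the iterated derivative within the set agrees with
the global one, provided the function is sufficiently smooth at the point. -/
lemma iteratedDerivWithin_eq_iteratedDeriv_of_contDiffAt {f : ℝ → ℝ} {s : Set ℝ}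
    (hs : UniqueDiffOn ℝ s) {n : ℕ} {x : ℝ} (h : ContDiffAt ℝ n f x) (hx : x ∈ s) :
    iteratedDerivWithin n f s x = iteratedDeriv n f x := by
  obtain ⟨u, hu, hcu⟩ := h.contDiffOn le_rfl (by simp)
  set v := interior u with hv
  have hvo : IsOpen v := isOpen_interior
  have hxv : x ∈ v := mem_interior_iff_mem_nhds.2 hu
  have hcv : ContDiffOn ℝ n f v := hcu.mono interior_subset
  have H := hcv.ftaylorSeriesWithin hvo.uniqueDiffOn
  have hsv : UniqueDiffOn ℝ (s ∩ v) := fun z hz => (hs z hz.1).inter (hvo.mem_nhds hz.2)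
  have e1 : iteratedDerivWithin n f (s ∩ v) x = iteratedDerivWithin n f s x := by
    simp only [iteratedDerivWithin_eq_iteratedFDerivWithin]
    rw [iteratedFDerivWithin_inter (hvo.mem_nhds hxv)]
  have e2 : ftaylorSeriesWithin ℝ f v x n = iteratedFDerivWithin ℝ n f (s ∩ v) x :=
    (H.mono inter_subset_right).eq_iteratedFDerivWithin_of_uniqueDiffOn le_rfl hsv ⟨hx, hxv⟩
  have e3 : ftaylorSeriesWithin ℝ f v x n = iteratedFDerivWithin ℝ n f v x :=
    H.eq_iteratedFDerivWithin_of_uniqueDiffOn le_rfl hvo.uniqueDiffOn hxv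
  have e4 : iteratedFDerivWithin ℝ n f v x = iteratedFDeriv ℝ n f x :=
    iteratedFDerivWithin_of_isOpen n hvo hxv
  rw [← e1, iteratedDerivWithin_eq_iteratedFDerivWithin, ← e2, e3, e4,
    iteratedDeriv_eq_iteratedFDeriv]


lemma taylor_bound_right {g : ℝ → ℝ} {s : Set ℝ} (hs : IsOpen s) {a h M : ℝ} (hh : 0 < h)
    {n : ℕ} (hsub : Set.Icc a (a + h) ⊆ s) (hg : ContDiffOn ℝ (n + 1) g s)
    (hM : ∀ t ∈ Set.Icc a (a + h), |iteratedDeriv (n + 1) g t| ≤ M) :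
    |g (a + h) - ∑ k ∈ Finset.range (n + 1),
        ((k ! : ℝ)⁻¹ * h ^ k) * iteratedDeriv k g a| ≤ M * h ^ (n + 1) / (n + 1)! := by
  have hab : a < a + h := by linarith
  have hmem : ∀ t ∈ Set.Icc a (a + h), ContDiffAt ℝ (n + 1) g t := fun t ht =>
    hg.contDiffAt (hs.mem_nhds (hsub ht))
  have hIcc := uniqueDiffOn_Icc hab
  have hgIcc : ContDiffOn ℝ (n + 1) g (Set.Icc a (a + h)) := hg.mono hsub
  have hcd : ContDiffOn ℝ n g (Set.Icc a (a + h)) :=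
    hgIcc.of_le (by exact_mod_cast Nat.le_succ n)
  have hdiff : DifferentiableOn ℝ (iteratedDerivWithin n g (Set.Icc a (a + h)))
      (Set.Ioo a (a + h)) := by
    have := hgIcc.differentiableOn_iteratedDerivWithin (m := n)
      (by exact_mod_cast Nat.lt_succ_self n) hIcc
    exact this.mono Set.Ioo_subset_Icc_self
  have hTay0 := taylor_mean_remainder_lagrange (x₀ := a) (x := a + h) hab.ne
    (by rwa [Set.uIcc_of_le hab.le]) (by rwa [Set.uIcc_of_le hab.le, Set.uIoo_of_le hab.le])
  rw [Set.uIcc_of_le hab.le, Set.uIoo_of_le hab.le] at hTay0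
  obtain ⟨ξ, hξ, hTay⟩ := hTay0
  have hsum : taylorWithinEval g n (Set.Icc a (a + h)) a (a + h) =
      ∑ k ∈ Finset.range (n + 1), ((k ! : ℝ)⁻¹ * h ^ k) * iteratedDeriv k g a := by
    rw [taylor_within_apply]
    refine Finset.sum_congr rfl fun k hk => ?_
    have hk' : (k : ℕ) ≤ n + 1 := by
      have := Finset.mem_range.1 hk; omega
    rw [iteratedDerivWithin_eq_iteratedDeriv_of_contDiffAt hIcc
      ((hmem a ⟨le_rfl, le_of_lt hab⟩).of_le (by exact_mod_cast hk'))
      ⟨le_rfl, le_of_lt hab⟩]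
    simp [smul_eq_mul]
  have hrem : iteratedDerivWithin (n + 1) g (Set.Icc a (a + h)) ξ =
      iteratedDeriv (n + 1) g ξ :=
    iteratedDerivWithin_eq_iteratedDeriv_of_contDiffAt hIcc
      (hmem ξ (Set.Ioo_subset_Icc_self hξ)) (Set.Ioo_subset_Icc_self hξ)
  rw [hsum] at hTay
  rw [hTay, hrem]
  have hbd : |iteratedDeriv (n + 1) g ξ| ≤ M := hM ξ (Set.Ioo_subset_Icc_self hξ)
  have hhp : (0:ℝ) < h ^ (n + 1) := pow_pos hh _
  have : a + h - a = h := by ring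
  rw [this, abs_div, abs_mul, abs_pow, abs_of_pos hh, abs_of_pos (by positivity :
    (0:ℝ) < ((n+1)! : ℝ))]
  gcongr

lemma iteratedDeriv_reflect {k : ℕ} {g : ℝ → ℝ} {a t : ℝ} :
    iteratedDeriv k (fun z => g (2 * a - z)) t = (-1 : ℝ) ^ k • iteratedDeriv k g (2 * a - t) := by
  have h1 := iteratedDeriv_comp_neg k (fun w => g (2 * a + w)) t
  rw [iteratedDeriv_comp_const_add] at h1
  simpa [sub_eq_add_neg] using h1

lemma taylor_bound_left {g : ℝ → ℝ} {s : Set ℝ} (hs : IsOpen s) {a h M : ℝ} (hh : 0 < h)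
    {n : ℕ} (hsub : Set.Icc (a - h) a ⊆ s) (hg : ContDiffOn ℝ (n + 1) g s)
    (hM : ∀ t ∈ Set.Icc (a - h) a, |iteratedDeriv (n + 1) g t| ≤ M) :
    |g (a - h) - ∑ k ∈ Finset.range (n + 1),
        ((k ! : ℝ)⁻¹ * (-h) ^ k) * iteratedDeriv k g a| ≤ M * h ^ (n + 1) / (n + 1)! := by
  set g' : ℝ → ℝ := fun z => g (2 * a - z) with hg'
  have refl_mem : ∀ t ∈ Set.Icc a (a + h), 2 * a - t ∈ Set.Icc (a - h) a := by
    intro t ht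
    rcases ht with ⟨h1, h2⟩
    constructor <;> [linarith; linarith]
  have hs' : IsOpen ((fun z => 2 * a - z) ⁻¹' s) :=
    IsOpen.preimage (by continuity) hs
  have hsub' : Set.Icc a (a + h) ⊆ (fun z => 2 * a - z) ⁻¹' s := fun t ht =>
    hsub (refl_mem t ht)
  have hg'' : ContDiffOn ℝ (n + 1) g' ((fun z => 2 * a - z) ⁻¹' s) := by
    refine hg.comp ?_ (fun t ht => ht)
    exact (contDiff_const.sub contDiff_id).contDiffOn
  have hM' : ∀ t ∈ Set.Icc a (a + h), |iteratedDeriv (n + 1) g' t| ≤ M := by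
    intro t ht
    rw [hg', iteratedDeriv_reflect]
    simp only [smul_eq_mul, abs_mul, abs_pow, abs_neg, abs_one, one_pow, one_mul]
    exact hM _ (refl_mem t ht)
  have H := taylor_bound_right hs' hh hsub' hg'' hM'
  have e1 : g' (a + h) = g (a - h) := by
    simp only [hg']
    congr 1
    ring
  have e2 : ∀ k : ℕ, iteratedDeriv k g' a = (-1 : ℝ) ^ k * iteratedDeriv k g a := by
    intro k
    rw [hg', iteratedDeriv_reflect, show 2 * a - a = a by ring, smul_eq_mul]
  have e3 : ∀ k ∈ Finset.range (n + 1), ((k ! : ℝ)⁻¹ * h ^ k) * iteratedDeriv k g' a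
      = ((k ! : ℝ)⁻¹ * (-h) ^ k) * iteratedDeriv k g a := by
    intro k _
    rw [e2, neg_pow]
    ring
  rw [e1, Finset.sum_congr rfl e3] at H
  exact H

lemma sym_bound6 {g : ℝ → ℝ} {s : Set ℝ} (hs : IsOpen s) {a h M : ℝ} (hh : 0 < h)
    (hsub : Set.Icc (a - h) (a + h) ⊆ s) (hg : ContDiffOn ℝ 6 g s)
    (hM : ∀ t ∈ Set.Icc (a - h) (a + h), |iteratedDeriv 6 g t| ≤ M) :
    |g (a + h) + g (a - h) - 2 * g a - iteratedDeriv 2 g a * h ^ 2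
      - iteratedDeriv 4 g a * h ^ 4 / 12| ≤ M * h ^ 6 / 360 := by
  have hg' : ContDiffOn ℝ ((5 : ℕ) + 1) g s := by exact_mod_cast hg
  have hsubR : Set.Icc a (a + h) ⊆ s := fun t ht => hsub ⟨by linarith [ht.1], ht.2⟩
  have hsubL : Set.Icc (a - h) a ⊆ s := fun t ht => hsub ⟨ht.1, by linarith [ht.2]⟩
  have hMR : ∀ t ∈ Set.Icc a (a + h), |iteratedDeriv (5 + 1) g t| ≤ M := fun t ht =>
    hM t ⟨by linarith [ht.1], ht.2⟩
  have hML : ∀ t ∈ Set.Icc (a - h) a, |iteratedDeriv (5 + 1) g t| ≤ M := fun t ht =>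
    hM t ⟨ht.1, by linarith [ht.2]⟩
  have HR := taylor_bound_right (n := 5) hs hh hsubR hg' hMR
  have HL := taylor_bound_left (n := 5) hs hh hsubL hg' hML
  have key : g (a + h) + g (a - h) - 2 * g a - iteratedDeriv 2 g a * h ^ 2
      - iteratedDeriv 4 g a * h ^ 4 / 12
      = (g (a + h) - ∑ k ∈ Finset.range (5 + 1),
            ((k ! : ℝ)⁻¹ * h ^ k) * iteratedDeriv k g a)
        + (g (a - h) - ∑ k ∈ Finset.range (5 + 1),
            ((k ! : ℝ)⁻¹ * (-h) ^ k) * iteratedDeriv k g a) := by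
    simp only [Finset.sum_range_succ, Finset.sum_range_zero, Nat.factorial,
      iteratedDeriv_zero]
    push_cast
    ring
  rw [key]
  refine le_trans (abs_add_le _ _) ?_
  refine le_trans (add_le_add HR HL) ?_
  norm_num [Nat.factorial]
  ring_nf
  try linarith

lemma sym_bound4 {g : ℝ → ℝ} {s : Set ℝ} (hs : IsOpen s) {a h M : ℝ} (hh : 0 < h)
    (hsub : Set.Icc (a - h) (a + h) ⊆ s) (hg : ContDiffOn ℝ 4 g s)
    (hM : ∀ t ∈ Set.Icc (a - h) (a + h), |iteratedDeriv 4 g t| ≤ M) :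
    |g (a + h) + g (a - h) - 2 * g a - iteratedDeriv 2 g a * h ^ 2| ≤ M * h ^ 4 / 12 := by
  have hg' : ContDiffOn ℝ ((3 : ℕ) + 1) g s := by exact_mod_cast hg
  have hsubR : Set.Icc a (a + h) ⊆ s := fun t ht => hsub ⟨by linarith [ht.1], ht.2⟩
  have hsubL : Set.Icc (a - h) a ⊆ s := fun t ht => hsub ⟨ht.1, by linarith [ht.2]⟩
  have hMR : ∀ t ∈ Set.Icc a (a + h), |iteratedDeriv (3 + 1) g t| ≤ M := fun t ht =>
    hM t ⟨by linarith [ht.1], ht.2⟩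
  have hML : ∀ t ∈ Set.Icc (a - h) a, |iteratedDeriv (3 + 1) g t| ≤ M := fun t ht =>
    hM t ⟨ht.1, by linarith [ht.2]⟩
  have HR := taylor_bound_right (n := 3) hs hh hsubR hg' hMR
  have HL := taylor_bound_left (n := 3) hs hh hsubL hg' hML
  have key : g (a + h) + g (a - h) - 2 * g a - iteratedDeriv 2 g a * h ^ 2
      = (g (a + h) - ∑ k ∈ Finset.range (3 + 1),
            ((k ! : ℝ)⁻¹ * h ^ k) * iteratedDeriv k g a)
        + (g (a - h) - ∑ k ∈ Finset.range (3 + 1),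
            ((k ! : ℝ)⁻¹ * (-h) ^ k) * iteratedDeriv k g a) := by
    simp only [Finset.sum_range_succ, Finset.sum_range_zero, Nat.factorial,
      iteratedDeriv_zero]
    push_cast
    ring
  rw [key]
  refine le_trans (abs_add_le _ _) ?_
  refine le_trans (add_le_add HR HL) ?_
  norm_num [Nat.factorial]
  ring_nf
  try linarith

lemma sym_bound2 {g : ℝ → ℝ} {s : Set ℝ} (hs : IsOpen s) {a h M : ℝ} (hh : 0 < h)
    (hsub : Set.Icc (a - h) (a + h) ⊆ s) (hg : ContDiffOn ℝ 2 g s)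
    (hM : ∀ t ∈ Set.Icc (a - h) (a + h), |iteratedDeriv 2 g t| ≤ M) :
    |g (a + h) + g (a - h) - 2 * g a| ≤ M * h ^ 2 := by
  have hg' : ContDiffOn ℝ ((1 : ℕ) + 1) g s := by exact_mod_cast hg
  have hsubR : Set.Icc a (a + h) ⊆ s := fun t ht => hsub ⟨by linarith [ht.1], ht.2⟩
  have hsubL : Set.Icc (a - h) a ⊆ s := fun t ht => hsub ⟨ht.1, by linarith [ht.2]⟩
  have hMR : ∀ t ∈ Set.Icc a (a + h), |iteratedDeriv (1 + 1) g t| ≤ M := fun t ht =>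
    hM t ⟨by linarith [ht.1], ht.2⟩
  have hML : ∀ t ∈ Set.Icc (a - h) a, |iteratedDeriv (1 + 1) g t| ≤ M := fun t ht =>
    hM t ⟨ht.1, by linarith [ht.2]⟩
  have HR := taylor_bound_right (n := 1) hs hh hsubR hg' hMR
  have HL := taylor_bound_left (n := 1) hs hh hsubL hg' hML
  have key : g (a + h) + g (a - h) - 2 * g a
      = (g (a + h) - ∑ k ∈ Finset.range (1 + 1),
            ((k ! : ℝ)⁻¹ * h ^ k) * iteratedDeriv k g a)
        + (g (a - h) - ∑ k ∈ Finset.range (1 + 1),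
            ((k ! : ℝ)⁻¹ * (-h) ^ k) * iteratedDeriv k g a) := by
    simp only [Finset.sum_range_succ, Finset.sum_range_zero, Nat.factorial,
      iteratedDeriv_zero]
    push_cast
    ring
  rw [key]
  refine le_trans (abs_add_le _ _) ?_
  refine le_trans (add_le_add HR HL) ?_
  norm_num [Nat.factorial]
  try ring_nf
  try linarith


noncomputable section

/-- vector family: first `j` entries are `(0,1)`, the rest `(1,0)`. -/
def mve (k j : ℕ) : Fin k → ℝ × ℝ := fun i => if (i : ℕ) < j then ((0:ℝ), (1:ℝ)) else ((1:ℝ), (0:ℝ))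

lemma mve_cons_e2 (k j : ℕ) :
    Fin.cons ((0:ℝ), (1:ℝ)) (mve k j) = mve (k + 1) (j + 1) := by
  funext i
  refine Fin.cases ?_ (fun i => ?_) i <;> simp [mve, Fin.cons_succ]

lemma mve_cons_e1 (k : ℕ) :
    Fin.cons ((1:ℝ), (0:ℝ)) (mve k 0) = mve (k + 1) 0 := by
  funext i
  refine Fin.cases ?_ (fun i => ?_) i <;> simp [mve, Fin.cons_succ]

lemma norm_mve (k j : ℕ) (i : Fin k) : ‖mve k j i‖ = 1 := by
  simp only [mve]
  split <;> simp [Prod.norm_def]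

lemma hasDerivAt_itf_snd {U : ℝ × ℝ → ℝ} {Ω : Set (ℝ × ℝ)} (hΩ : IsOpen Ω)
    (hU : ContDiffOn ℝ 6 U Ω) {n : ℕ} (hn : n < 6) (m : Fin n → ℝ × ℝ) {c t : ℝ}
    (hmem : (c, t) ∈ Ω) :
    HasDerivAt (fun τ => iteratedFDeriv ℝ n U (c, τ) m)
      (iteratedFDeriv ℝ (n + 1) U (c, t) (Fin.cons ((0:ℝ), (1:ℝ)) m)) t := by
  have hca : ContDiffAt ℝ 6 U (c, t) := hU.contDiffAt (hΩ.mem_nhds hmem)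
  have hd : DifferentiableAt ℝ (iteratedFDeriv ℝ n U) (c, t) := by
    have h1 : ContDiffAt ℝ 1 (iteratedFDeriv ℝ n U) (c, t) :=
      hca.iteratedFDeriv_right (by exact_mod_cast (by omega : 1 + n ≤ 6))
    exact h1.differentiableAt one_ne_zero
  have hline : HasDerivAt (fun τ : ℝ => ((c, τ) : ℝ × ℝ)) (((0:ℝ), (1:ℝ))) t :=
    (hasDerivAt_const t c).prodMk (hasDerivAt_id' t)
  have h1 := hd.hasFDerivAt.comp_hasDerivAt t hline
  have h2 := ((ContinuousMultilinearMap.apply ℝ (fun _ : Fin n => ℝ × ℝ) ℝ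
    m).hasFDerivAt.comp_hasDerivAt t h1)
  rw [iteratedFDeriv_succ_apply_left]
  exact h2

lemma hasDerivAt_itf_fst {U : ℝ × ℝ → ℝ} {Ω : Set (ℝ × ℝ)} (hΩ : IsOpen Ω)
    (hU : ContDiffOn ℝ 6 U Ω) {n : ℕ} (hn : n < 6) (m : Fin n → ℝ × ℝ) {c t : ℝ}
    (hmem : (c, t) ∈ Ω) :
    HasDerivAt (fun σ => iteratedFDeriv ℝ n U (σ, t) m)
      (iteratedFDeriv ℝ (n + 1) U (c, t) (Fin.cons ((1:ℝ), (0:ℝ)) m)) c := by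
  have hca : ContDiffAt ℝ 6 U (c, t) := hU.contDiffAt (hΩ.mem_nhds hmem)
  have hd : DifferentiableAt ℝ (iteratedFDeriv ℝ n U) (c, t) := by
    have h1 : ContDiffAt ℝ 1 (iteratedFDeriv ℝ n U) (c, t) :=
      hca.iteratedFDeriv_right (by exact_mod_cast (by omega : 1 + n ≤ 6))
    exact h1.differentiableAt one_ne_zero
  have hline : HasDerivAt (fun σ : ℝ => ((σ, t) : ℝ × ℝ)) (((1:ℝ), (0:ℝ))) c :=
    (hasDerivAt_id' c).prodMk (hasDerivAt_const c t)
  have h1 := hd.hasFDerivAt.comp_hasDerivAt c hline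
  have h2 := ((ContinuousMultilinearMap.apply ℝ (fun _ : Fin n => ℝ × ℝ) ℝ
    m).hasFDerivAt.comp_hasDerivAt c h1)
  rw [iteratedFDeriv_succ_apply_left]
  exact h2

lemma iter_snd {U : ℝ × ℝ → ℝ} {Ω : Set (ℝ × ℝ)} (hΩ : IsOpen Ω)
    (hU : ContDiffOn ℝ 6 U Ω) :
    ∀ (j n : ℕ), n + j ≤ 6 → ∀ (c t : ℝ), (c, t) ∈ Ω →
      iteratedDeriv j (fun τ => iteratedFDeriv ℝ n U (c, τ) (mve n 0)) t
        = iteratedFDeriv ℝ (n + j) U (c, t) (mve (n + j) j) := by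
  intro j
  induction j with
  | zero => intro n _ c t _; simp [mve]
  | succ j IH =>
    intro n hnj c t hmem
    have hopen : IsOpen {τ : ℝ | (c, τ) ∈ Ω} := hΩ.preimage (by continuity)
    have hev : ∀ᶠ τ in 𝓝 t, (c, τ) ∈ Ω := hopen.mem_nhds hmem
    rw [iteratedDeriv_succ]
    have hE : (iteratedDeriv j fun τ => iteratedFDeriv ℝ n U (c, τ) (mve n 0))
        =ᶠ[𝓝 t] fun τ => iteratedFDeriv ℝ (n + j) U (c, τ) (mve (n + j) j) := by
      filter_upwards [hev] with τ hτ
      exact IH n (by omega) c τ hτ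
    rw [hE.deriv_eq]
    have hd := (hasDerivAt_itf_snd hΩ hU (n := n + j) (by omega) (mve (n + j) j)
      hmem).deriv
    rw [hd, mve_cons_e2]
    rfl

lemma iter_fst {U : ℝ × ℝ → ℝ} {Ω : Set (ℝ × ℝ)} (hΩ : IsOpen Ω)
    (hU : ContDiffOn ℝ 6 U Ω) :
    ∀ (k : ℕ), k ≤ 6 → ∀ (c t : ℝ), (c, t) ∈ Ω →
      iteratedDeriv k (fun σ => U (σ, t)) c
        = iteratedFDeriv ℝ k U (c, t) (mve k 0) := by
  intro k
  induction k with
  | zero => intro _ c t _; simp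
  | succ k IH =>
    intro hk c t hmem
    have hopen : IsOpen {σ : ℝ | (σ, t) ∈ Ω} := hΩ.preimage (by continuity)
    have hev : ∀ᶠ σ in 𝓝 c, (σ, t) ∈ Ω := hopen.mem_nhds hmem
    rw [iteratedDeriv_succ]
    have hE : (iteratedDeriv k fun σ => U (σ, t))
        =ᶠ[𝓝 c] fun σ => iteratedFDeriv ℝ k U (σ, t) (mve k 0) := by
      filter_upwards [hev] with σ hσ
      exact IH (by omega) σ t hσ
    rw [hE.deriv_eq]
    have hd := (hasDerivAt_itf_fst hΩ hU (n := k) (by omega) (mve k 0) hmem).deriv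
    rw [hd, mve_cons_e1]

lemma contDiffOn_itf_slice_snd {U : ℝ × ℝ → ℝ} {Ω : Set (ℝ × ℝ)} (hΩ : IsOpen Ω)
    (hU : ContDiffOn ℝ 6 U Ω) (n m : ℕ) (hm : m + n ≤ 6) (c : ℝ) (mm : Fin n → ℝ × ℝ) :
    ContDiffOn ℝ m (fun t => iteratedFDeriv ℝ n U (c, t) mm) {t : ℝ | (c, t) ∈ Ω} := by
  have hW : ContDiffOn ℝ m (iteratedFDerivWithin ℝ n U Ω) Ω := fun p hp =>
    (hU p hp).iteratedFDerivWithin_right hΩ.uniqueDiffOn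
      (by exact_mod_cast hm) hp
  have hG : ContDiffOn ℝ m (iteratedFDeriv ℝ n U) Ω :=
    hW.congr ((iteratedFDerivWithin_of_isOpen n hΩ).symm)
  have hline : ContDiffOn ℝ m (fun t : ℝ => ((c, t) : ℝ × ℝ)) {t : ℝ | (c, t) ∈ Ω} :=
    (contDiff_const.prodMk contDiff_id).contDiffOn
  have hcomp : ContDiffOn ℝ m ((iteratedFDeriv ℝ n U) ∘ fun t : ℝ => ((c, t) : ℝ × ℝ))
      {t : ℝ | (c, t) ∈ Ω} := hG.comp hline (fun t ht => ht)
  exact ((ContinuousMultilinearMap.apply ℝ (fun _ : Fin n => ℝ × ℝ) ℝ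
    mm).contDiff.comp_contDiffOn hcomp)


end

/-- The Laplacian `Δu = u_xx + u_yy` via iterated coordinate derivatives. -/
noncomputable def lap2 (u : ℝ → ℝ → ℝ) (x y : ℝ) : ℝ :=
  iteratedDeriv 2 (fun t => u t y) x + iteratedDeriv 2 (fun t => u x t) y

/-- The biharmonic operator `Δ²u = u_xxxx + 2 u_xxyy + u_yyyy`. -/
noncomputable def bilap2 (u : ℝ → ℝ → ℝ) (x y : ℝ) : ℝ :=
  iteratedDeriv 4 (fun t => u t y) x
    + 2 * iteratedDeriv 2 (fun s => iteratedDeriv 2 (fun t => u t s) x) y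
    + iteratedDeriv 4 (fun t => u x t) y

set_option maxHeartbeats 1000000 in
/-- The 9-point Mehrstellen box stencil satisfies
`(1/(6h²))·(20u − 4·edges − corners) = −Δu − (h²/12)·Δ²u + O(h⁴)`
for `u` of class `C⁶` in a neighborhood of `(x, y)`. -/
theorem mehrstellen_stencil_expansion
    (u : ℝ → ℝ → ℝ) (x y ε : ℝ) (hε : 0 < ε)
    (hu : ContDiffOn ℝ 6 (fun p : ℝ × ℝ => u p.1 p.2) (Metric.ball (x, y) ε)) :
    ∃ C : ℝ, ∀ h : ℝ, 0 < h → 2 * h < ε →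
      |(1 / (6 * h ^ 2)) *
          (20 * u x y
            - 4 * (u (x + h) y + u (x - h) y + u x (y + h) + u x (y - h))
            - (u (x + h) (y + h) + u (x + h) (y - h)
                + u (x - h) (y + h) + u (x - h) (y - h)))
        - (-(lap2 u x y) - (h ^ 2 / 12) * bilap2 u x y)| ≤ C * h ^ 4 := by
  have hΩ : IsOpen (Metric.ball ((x, y) : ℝ × ℝ) ε) := Metric.isOpen_ball
  -- uniform bound on the sixth derivative
  have hWcont : ContinuousOn (iteratedFDeriv ℝ 6 (fun p : ℝ × ℝ => u p.1 p.2))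
      (Metric.ball ((x, y) : ℝ × ℝ) ε) := by
    have h1 := hu.continuousOn_iteratedFDerivWithin (m := 6) (by norm_num) hΩ.uniqueDiffOn
    exact h1.congr ((iteratedFDerivWithin_of_isOpen 6 hΩ).symm)
  obtain ⟨M, hMb⟩ := (isCompact_closedBall ((x, y) : ℝ × ℝ) (ε / 2)).exists_bound_of_continuousOn
    (hWcont.mono (Metric.closedBall_subset_ball (by linarith)))
  have hM0 : 0 ≤ M := le_trans (norm_nonneg _) (hMb _ (Metric.mem_closedBall_self (by linarith)))
  refine ⟨M, fun h hh hhe => ?_⟩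
  have hh2 : h < ε / 2 := by linarith
  have hmemΩ : ∀ s t : ℝ, |s - x| < ε / 2 → |t - y| < ε / 2 →
      ((s, t) : ℝ × ℝ) ∈ Metric.ball ((x, y) : ℝ × ℝ) ε := by
    intro s t hs ht
    rw [Metric.mem_ball, Prod.dist_eq, Real.dist_eq, Real.dist_eq]
    apply max_lt <;> linarith
  have hmemK : ∀ s t : ℝ, |s - x| ≤ h → |t - y| ≤ h →
      ((s, t) : ℝ × ℝ) ∈ Metric.closedBall ((x, y) : ℝ × ℝ) (ε / 2) := by
    intro s t hs ht
    rw [Metric.mem_closedBall, Prod.dist_eq, Real.dist_eq, Real.dist_eq]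
    apply max_le <;> linarith
  have hB : ∀ s t : ℝ, |s - x| ≤ h → |t - y| ≤ h → ∀ j : ℕ,
      |iteratedFDeriv ℝ 6 (fun p : ℝ × ℝ => u p.1 p.2) (s, t) (mve 6 j)| ≤ M := by
    intro s t hs ht j
    have h1 := (iteratedFDeriv ℝ 6 (fun p : ℝ × ℝ => u p.1 p.2) (s, t)).le_opNorm (mve 6 j)
    have h2 : (∏ i, ‖mve 6 j i‖) = 1 := by simp [norm_mve]
    rw [h2, mul_one] at h1
    rw [← Real.norm_eq_abs]
    exact h1.trans (hMb _ (hmemK s t hs ht))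
  -- abs facts
  have hx0 : |x - x| ≤ h := by simp [hh.le]
  have hy0 : |y - y| ≤ h := by simp [hh.le]
  have hxp : |x + h - x| ≤ h := by simp [abs_of_pos hh]
  have hxm : |x - h - x| ≤ h := by
    rw [show x - h - x = -h by ring, abs_neg, abs_of_pos hh]
  have hyp : |y + h - y| ≤ h := by simp [abs_of_pos hh]
  have hym : |y - h - y| ≤ h := by
    rw [show y - h - y = -h by ring, abs_neg, abs_of_pos hh]
  have habs : ∀ a t : ℝ, t ∈ Set.Icc (a - h) (a + h) → |t - a| ≤ h := by
    intro a t ht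
    rw [abs_le]
    exact ⟨by linarith [ht.1], by linarith [ht.2]⟩
  have hsubIx : Set.Icc (x - h) (x + h) ⊆ Set.Ioo (x - ε / 2) (x + ε / 2) := by
    intro s hs
    have := habs x s hs
    rw [abs_le] at this
    exact ⟨by linarith [this.1], by linarith [this.2]⟩
  have hIxmem : ∀ s ∈ Set.Ioo (x - ε / 2) (x + ε / 2), ∀ t : ℝ, |t - y| ≤ h →
      ((s, t) : ℝ × ℝ) ∈ Metric.ball ((x, y) : ℝ × ℝ) ε := by
    intro s hs t ht
    refine hmemΩ s t ?_ (lt_of_le_of_lt ht hh2)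
    rw [abs_lt]
    exact ⟨by linarith [hs.1], by linarith [hs.2]⟩
  -- horizontal slices
  have hslice : ∀ t : ℝ, |t - y| ≤ h →
      ContDiffOn ℝ 6 (fun s : ℝ => u s t) (Set.Ioo (x - ε / 2) (x + ε / 2)) := by
    intro t ht
    exact hu.comp ((contDiff_id.prodMk contDiff_const).contDiffOn)
      (fun s hs => hIxmem s hs t ht)
  have hMslice : ∀ t : ℝ, |t - y| ≤ h → ∀ s' ∈ Set.Icc (x - h) (x + h),
      |iteratedDeriv 6 (fun s : ℝ => u s t) s'| ≤ M := by
    intro t ht s' hs'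
    have hm6 : ((s', t) : ℝ × ℝ) ∈ Metric.ball ((x, y) : ℝ × ℝ) ε :=
      hmemΩ s' t (lt_of_le_of_lt (habs x s' hs') hh2) (lt_of_le_of_lt ht hh2)
    have e := iter_fst hΩ hu 6 le_rfl s' t hm6
    rw [show (fun s : ℝ => u s t) = (fun σ : ℝ => (fun p : ℝ × ℝ => u p.1 p.2) (σ, t))
      from rfl, e]
    exact hB s' t (habs x s' hs') ht 0
  have E1 := sym_bound6 isOpen_Ioo hh hsubIx (hslice y hy0) (hMslice y hy0)
  -- vertical slice
  have hsubIy : Set.Icc (y - h) (y + h) ⊆ Set.Ioo (y - ε / 2) (y + ε / 2) := by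
    intro t ht
    have := habs y t ht
    rw [abs_le] at this
    exact ⟨by linarith [this.1], by linarith [this.2]⟩
  have hxe : |x - x| < ε / 2 := by
    rw [sub_self, abs_zero]; linarith
  have hsliceV : ContDiffOn ℝ 6 (fun t : ℝ => u x t) (Set.Ioo (y - ε / 2) (y + ε / 2)) := by
    refine hu.comp ((contDiff_const.prodMk contDiff_id).contDiffOn) (fun t htt => ?_)
    refine hmemΩ x t hxe ?_
    rw [abs_lt]
    exact ⟨by linarith [htt.1], by linarith [htt.2]⟩
  have e0 : (fun τ : ℝ => iteratedFDeriv ℝ 0 (fun p : ℝ × ℝ => u p.1 p.2) (x, τ) (mve 0 0))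
      = (fun t : ℝ => u x t) := by
    funext τ
    simp
  have hMsliceV : ∀ t' ∈ Set.Icc (y - h) (y + h),
      |iteratedDeriv 6 (fun t : ℝ => u x t) t'| ≤ M := by
    intro t' ht'
    have hm6 : ((x, t') : ℝ × ℝ) ∈ Metric.ball ((x, y) : ℝ × ℝ) ε :=
      hmemΩ x t' hxe (lt_of_le_of_lt (habs y t' ht') hh2)
    have e := iter_snd hΩ hu 6 0 (by norm_num) x t' hm6
    rw [e0] at e
    rw [e]
    have := hB x t' hx0 (habs y t' ht') 6
    simpa using this
  have E2 := sym_bound6 isOpen_Ioo hh hsubIy hsliceV hMsliceV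
  -- the compound function V
  have hVA := hslice (y + h) hyp
  have hVB := hslice (y - h) hym
  have hVC := hslice y hy0
  have hV : ContDiffOn ℝ 6 (fun σ : ℝ => u σ (y + h) + u σ (y - h) - 2 * u σ y)
      (Set.Ioo (x - ε / 2) (x + ε / 2)) :=
    (hVA.add hVB).sub (contDiffOn_const.mul hVC)
  have hud : UniqueDiffOn ℝ (Set.Ioo (x - ε / 2) (x + ε / 2)) := isOpen_Ioo.uniqueDiffOn
  have hsplit : ∀ k : ℕ, k ≤ 6 → ∀ s' ∈ Set.Ioo (x - ε / 2) (x + ε / 2),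
      iteratedDeriv k (fun σ : ℝ => u σ (y + h) + u σ (y - h) - 2 * u σ y) s'
        = iteratedDeriv k (fun σ : ℝ => u σ (y + h)) s'
          + iteratedDeriv k (fun σ : ℝ => u σ (y - h)) s'
          - 2 * iteratedDeriv k (fun σ : ℝ => u σ y) s' := by
    intro k hk s' hs'
    have hkc : (k : WithTop ℕ∞) ≤ 6 := by exact_mod_cast hk
    have hca : ∀ g : ℝ → ℝ, ContDiffOn ℝ 6 g (Set.Ioo (x - ε / 2) (x + ε / 2)) →
        ContDiffAt ℝ k g s' := fun g hg =>
      (hg.contDiffAt (isOpen_Ioo.mem_nhds hs')).of_le hkc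
    have hAk : ContDiffOn ℝ k (fun σ : ℝ => u σ (y + h)) _ := hVA.of_le hkc
    have hBk : ContDiffOn ℝ k (fun σ : ℝ => u σ (y - h)) _ := hVB.of_le hkc
    have hCk : ContDiffOn ℝ k (fun σ : ℝ => u σ y) _ := hVC.of_le hkc
    rw [← iteratedDerivWithin_eq_iteratedDeriv_of_contDiffAt hud (hca _ hV) hs',
      ← iteratedDerivWithin_eq_iteratedDeriv_of_contDiffAt hud (hca _ hVA) hs',
      ← iteratedDerivWithin_eq_iteratedDeriv_of_contDiffAt hud (hca _ hVB) hs',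
      ← iteratedDerivWithin_eq_iteratedDeriv_of_contDiffAt hud (hca _ hVC) hs']
    have step1 : iteratedDerivWithin k (fun σ : ℝ => u σ (y + h) + u σ (y - h) - 2 * u σ y)
        (Set.Ioo (x - ε / 2) (x + ε / 2)) s'
        = iteratedDerivWithin k (fun σ : ℝ => u σ (y + h) + u σ (y - h))
            (Set.Ioo (x - ε / 2) (x + ε / 2)) s'
          - iteratedDerivWithin k (fun σ : ℝ => 2 * u σ y)
            (Set.Ioo (x - ε / 2) (x + ε / 2)) s' :=
      iteratedDerivWithin_sub hs' hud ((hAk.add hBk) s' hs') ((contDiffOn_const.mul hCk) s' hs')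
    have step2 : iteratedDerivWithin k (fun σ : ℝ => u σ (y + h) + u σ (y - h))
        (Set.Ioo (x - ε / 2) (x + ε / 2)) s'
        = iteratedDerivWithin k (fun σ : ℝ => u σ (y + h))
            (Set.Ioo (x - ε / 2) (x + ε / 2)) s'
          + iteratedDerivWithin k (fun σ : ℝ => u σ (y - h))
            (Set.Ioo (x - ε / 2) (x + ε / 2)) s' :=
      iteratedDerivWithin_add hs' hud (hAk s' hs') (hBk s' hs')
    have step3 : iteratedDerivWithin k (fun σ : ℝ => 2 * u σ y)
        (Set.Ioo (x - ε / 2) (x + ε / 2)) s'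
        = 2 * iteratedDerivWithin k (fun σ : ℝ => u σ y)
            (Set.Ioo (x - ε / 2) (x + ε / 2)) s' :=
      iteratedDerivWithin_const_mul hs' hud (2 : ℝ) (hCk s' hs')
    rw [step1, step2, step3]
  have hMV : ∀ t ∈ Set.Icc (x - h) (x + h),
      |iteratedDeriv 6 (fun σ : ℝ => u σ (y + h) + u σ (y - h) - 2 * u σ y) t| ≤ 4 * M := by
    intro t ht
    rw [hsplit 6 le_rfl t (hsubIx ht)]
    have b1 := abs_le.1 (hMslice (y + h) hyp t ht)
    have b2 := abs_le.1 (hMslice (y - h) hym t ht)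
    have b3 := abs_le.1 (hMslice y hy0 t ht)
    rw [abs_le]
    constructor <;> [skip; skip] <;>
      [linarith [b1.1, b2.1, b3.2]; linarith [b1.2, b2.2, b3.1]]
  have E3 := sym_bound6 isOpen_Ioo hh hsubIx hV hMV
  have hxIx : x ∈ Set.Ioo (x - ε / 2) (x + ε / 2) := by
    constructor <;> [linarith; linarith]
  rw [hsplit 2 (by norm_num) x hxIx, hsplit 4 (by norm_num) x hxIx] at E3
  -- identify x-second/fourth derivatives with iterated Fréchet derivatives
  have hq : ∀ t : ℝ, |t - y| ≤ h → iteratedDeriv 2 (fun σ : ℝ => u σ t) x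
      = iteratedFDeriv ℝ 2 (fun p : ℝ × ℝ => u p.1 p.2) (x, t) (mve 2 0) := by
    intro t ht
    exact iter_fst hΩ hu 2 (by norm_num) x t (hmemΩ x t hxe (lt_of_le_of_lt ht hh2))
  have hr : ∀ t : ℝ, |t - y| ≤ h → iteratedDeriv 4 (fun σ : ℝ => u σ t) x
      = iteratedFDeriv ℝ 4 (fun p : ℝ × ℝ => u p.1 p.2) (x, t) (mve 4 0) := by
    intro t ht
    exact iter_fst hΩ hu 4 (by norm_num) x t (hmemΩ x t hxe (lt_of_le_of_lt ht hh2))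
  rw [hq _ hyp, hq _ hym, hq _ hy0, hr _ hyp, hr _ hym, hr _ hy0] at E3
  -- fourth-order bound for F2
  have hsQ : IsOpen {t : ℝ | ((x, t) : ℝ × ℝ) ∈ Metric.ball ((x, y) : ℝ × ℝ) ε} :=
    hΩ.preimage (continuous_const.prodMk continuous_id)
  have hsubQ : Set.Icc (y - h) (y + h)
      ⊆ {t : ℝ | ((x, t) : ℝ × ℝ) ∈ Metric.ball ((x, y) : ℝ × ℝ) ε} := fun t ht =>
    hmemΩ x t hxe (lt_of_le_of_lt (habs y t ht) hh2)
  have hqC : ContDiffOn ℝ 4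
      (fun t : ℝ => iteratedFDeriv ℝ 2 (fun p : ℝ × ℝ => u p.1 p.2) (x, t) (mve 2 0))
      {t : ℝ | ((x, t) : ℝ × ℝ) ∈ Metric.ball ((x, y) : ℝ × ℝ) ε} :=
    contDiffOn_itf_slice_snd hΩ hu 2 4 (by norm_num) x (mve 2 0)
  have hMq : ∀ t ∈ Set.Icc (y - h) (y + h),
      |iteratedDeriv 4
        (fun t : ℝ => iteratedFDeriv ℝ 2 (fun p : ℝ × ℝ => u p.1 p.2) (x, t) (mve 2 0)) t| ≤ M := by
    intro t ht
    have e := iter_snd hΩ hu 4 2 (by norm_num) x t (hsubQ ht)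
    norm_num at e
    rw [e]
    exact hB x t hx0 (habs y t ht) 4
  have E4 := sym_bound4 hsQ hh hsubQ hqC hMq
  -- second-order bound for F4
  have hrC : ContDiffOn ℝ 2
      (fun t : ℝ => iteratedFDeriv ℝ 4 (fun p : ℝ × ℝ => u p.1 p.2) (x, t) (mve 4 0))
      {t : ℝ | ((x, t) : ℝ × ℝ) ∈ Metric.ball ((x, y) : ℝ × ℝ) ε} :=
    contDiffOn_itf_slice_snd hΩ hu 4 2 (by norm_num) x (mve 4 0)
  have hMr : ∀ t ∈ Set.Icc (y - h) (y + h),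
      |iteratedDeriv 2
        (fun t : ℝ => iteratedFDeriv ℝ 4 (fun p : ℝ × ℝ => u p.1 p.2) (x, t) (mve 4 0)) t| ≤ M := by
    intro t ht
    have e := iter_snd hΩ hu 2 4 (by norm_num) x t (hsubQ ht)
    norm_num at e
    rw [e]
    exact hB x t hx0 (habs y t ht) 2
  have E5 := sym_bound2 hsQ hh hsubQ hrC hMr
  -- the mixed derivative
  have hdM : iteratedDeriv 2 (fun s => iteratedDeriv 2 (fun t => u t s) x) y
      = iteratedDeriv 2
        (fun t : ℝ => iteratedFDeriv ℝ 2 (fun p : ℝ × ℝ => u p.1 p.2) (x, t) (mve 2 0)) y := by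
    apply Filter.EventuallyEq.iteratedDeriv_eq
    have hev : ∀ᶠ t in 𝓝 y, ((x, t) : ℝ × ℝ) ∈ Metric.ball ((x, y) : ℝ × ℝ) ε :=
      hsQ.mem_nhds (hmemΩ x y hxe (by rw [sub_self, abs_zero]; linarith))
    filter_upwards [hev] with t ht
    exact iter_fst hΩ hu 2 (by norm_num) x t ht
  simp only [lap2, bilap2, hdM]
  have hp6 : (0 : ℝ) < 6 * h ^ 2 := by positivity
  have hgoal : 1 / (6 * h ^ 2) *
          (20 * u x y
            - 4 * (u (x + h) y + u (x - h) y + u x (y + h) + u x (y - h))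
            - (u (x + h) (y + h) + u (x + h) (y - h)
                + u (x - h) (y + h) + u (x - h) (y - h)))
        - (-(iteratedDeriv 2 (fun t => u t y) x + iteratedDeriv 2 (fun t => u x t) y)
            - h ^ 2 / 12 * (iteratedDeriv 4 (fun t => u t y) x
              + 2 * iteratedDeriv 2
                  (fun t : ℝ => iteratedFDeriv ℝ 2 (fun p : ℝ × ℝ => u p.1 p.2) (x, t)
                    (mve 2 0)) y
              + iteratedDeriv 4 (fun t => u x t) y))
      = ((-6) * (u (x + h) y + u (x - h) y - 2 * u x y
            - iteratedDeriv 2 (fun t => u t y) x * h ^ 2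
            - iteratedDeriv 4 (fun t => u t y) x * h ^ 4 / 12)
        - 6 * (u x (y + h) + u x (y - h) - 2 * u x y
            - iteratedDeriv 2 (fun t => u x t) y * h ^ 2
            - iteratedDeriv 4 (fun t => u x t) y * h ^ 4 / 12)
        - (u (x + h) (y + h) + u (x + h) (y - h) - 2 * u (x + h) y
            + (u (x - h) (y + h) + u (x - h) (y - h) - 2 * u (x - h) y)
            - 2 * (u x (y + h) + u x (y - h) - 2 * u x y)
            - (iteratedFDeriv ℝ 2 (fun p : ℝ × ℝ => u p.1 p.2) (x, y + h) (mve 2 0)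
                + iteratedFDeriv ℝ 2 (fun p : ℝ × ℝ => u p.1 p.2) (x, y - h) (mve 2 0)
                - 2 * iteratedFDeriv ℝ 2 (fun p : ℝ × ℝ => u p.1 p.2) (x, y) (mve 2 0)) * h ^ 2
            - (iteratedFDeriv ℝ 4 (fun p : ℝ × ℝ => u p.1 p.2) (x, y + h) (mve 4 0)
                + iteratedFDeriv ℝ 4 (fun p : ℝ × ℝ => u p.1 p.2) (x, y - h) (mve 4 0)
                - 2 * iteratedFDeriv ℝ 4 (fun p : ℝ × ℝ => u p.1 p.2) (x, y) (mve 4 0))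
              * h ^ 4 / 12)
        - h ^ 2 * (iteratedFDeriv ℝ 2 (fun p : ℝ × ℝ => u p.1 p.2) (x, y + h) (mve 2 0)
            + iteratedFDeriv ℝ 2 (fun p : ℝ × ℝ => u p.1 p.2) (x, y - h) (mve 2 0)
            - 2 * iteratedFDeriv ℝ 2 (fun p : ℝ × ℝ => u p.1 p.2) (x, y) (mve 2 0)
            - iteratedDeriv 2
                (fun t : ℝ => iteratedFDeriv ℝ 2 (fun p : ℝ × ℝ => u p.1 p.2) (x, t)
                  (mve 2 0)) y * h ^ 2)
        - h ^ 4 / 12 * (iteratedFDeriv ℝ 4 (fun p : ℝ × ℝ => u p.1 p.2) (x, y + h) (mve 4 0)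
            + iteratedFDeriv ℝ 4 (fun p : ℝ × ℝ => u p.1 p.2) (x, y - h) (mve 4 0)
            - 2 * iteratedFDeriv ℝ 4 (fun p : ℝ × ℝ => u p.1 p.2) (x, y) (mve 4 0)))
        / (6 * h ^ 2) := by
    field_simp
    ring
  rw [hgoal, abs_div, abs_of_pos hp6, div_le_iff₀ hp6]
  have i1 := abs_le.1 E1
  have i2 := abs_le.1 E2
  have i3 := abs_le.1 E3
  have hE4 := abs_le.1 E4
  have hE5 := abs_le.1 E5
  have j4a := mul_le_mul_of_nonneg_left hE4.2 (pow_nonneg hh.le 2)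
  have j4b := mul_le_mul_of_nonneg_left hE4.1 (pow_nonneg hh.le 2)
  have j5a := mul_le_mul_of_nonneg_left hE5.2 (pow_nonneg hh.le 4)
  have j5b := mul_le_mul_of_nonneg_left hE5.1 (pow_nonneg hh.le 4)
  have hM6 : 0 ≤ M * h ^ 6 := mul_nonneg hM0 (pow_nonneg hh.le 6)
  rw [abs_le]
  constructor <;>
    linarith [i1.1, i1.2, i2.1, i2.2, i3.1, i3.2, j4a, j4b, j5a, j5b, hM6]
end

section
/- If u : ℝ² → ℝ is C⁶ and satisfies −Δu = f for some C⁴ function f, then the Mehrstellen scheme is fourth-order consistent: (1/(6h²))·(20u(x,y) − 4∑_edge u − ∑_corner u) − (1/12)·(8f(x,y) + ∑_edge f) = O(h⁴), where ∑_edge denotes the sum over the four points (x±h,y),(x,y±h) and ∑_corner the sum over (x±h,y±h). -/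
open Set Filter Topology

lemma iDW_Icc {n m : ℕ} {f : ℝ → ℝ} {J : Set ℝ} (hJ : IsOpen J)
    (hf : ContDiffOn ℝ n f J) {a b t : ℝ} (hab : a < b) (hsub : Icc a b ⊆ J)
    (ht : t ∈ Icc a b) (hmn : m ≤ n) :
    iteratedDerivWithin m f (Icc a b) t = iteratedDeriv m f t := by
  have h1 : HasFTaylorSeriesUpToOn n f (ftaylorSeriesWithin ℝ f J) J :=
    hf.ftaylorSeriesWithin hJ.uniqueDiffOn
  have h2 := (h1.mono hsub).eq_iteratedFDerivWithin_of_uniqueDiffOn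
      (by exact_mod_cast hmn) (uniqueDiffOn_Icc hab) ht
  have h3 : ftaylorSeriesWithin ℝ f J t m = iteratedFDeriv ℝ m f t := by
    show iteratedFDerivWithin ℝ m f J t = _
    exact iteratedFDerivWithin_of_isOpen m hJ (hsub ht)
  rw [iteratedDerivWithin_eq_iteratedFDerivWithin, iteratedDeriv_eq_iteratedFDeriv, ← h2, h3]

lemma taylor_right {n : ℕ} {g : ℝ → ℝ} {J : Set ℝ} (hJ : IsOpen J)
    (hg : ContDiffOn ℝ (n + 1) g J) {c h M : ℝ} (h0 : 0 < h)
    (hsub : Icc c (c + h) ⊆ J)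
    (hM : ∀ t ∈ Icc c (c + h), |iteratedDeriv (n + 1) g t| ≤ M) :
    |g (c + h) - ∑ k ∈ Finset.range (n + 1),
        h ^ k / (k.factorial : ℝ) * iteratedDeriv k g c| ≤ M * h ^ (n + 1) := by
  have hab : c < c + h := by linarith
  have hg' : ContDiffOn ℝ ((n + 1 : ℕ) : ℕ∞) g J := by exact_mod_cast hg
  have hsm : ContDiffOn ℝ (n + 1) g (Icc c (c + h)) := hg.mono hsub
  have hC : ∀ t ∈ Icc c (c + h), ‖iteratedDerivWithin (n + 1) g (Icc c (c + h)) t‖ ≤ M := by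
    intro t ht
    rw [Real.norm_eq_abs, iDW_Icc hJ hg' hab hsub ht le_rfl]
    exact hM t ht
  have hbnd := taylor_mean_remainder_bound hab.le hsm (right_mem_Icc.2 hab.le) hC
  have hsum : taylorWithinEval g n (Icc c (c + h)) c (c + h) =
      ∑ k ∈ Finset.range (n + 1), h ^ k / (k.factorial : ℝ) * iteratedDeriv k g c := by
    rw [taylor_within_apply]
    refine Finset.sum_congr rfl fun k hk => ?_
    rw [iDW_Icc hJ hg' hab hsub (left_mem_Icc.2 hab.le)
      (Nat.le_of_lt_succ (Finset.mem_range.1 hk) |>.trans (Nat.le_succ n))]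
    rw [smul_eq_mul]
    ring_nf
  have hM0 : 0 ≤ M := le_trans (abs_nonneg _) (hM c (left_mem_Icc.2 hab.le))
  rw [hsum] at hbnd
  have h2 : M * (c + h - c) ^ (n + 1) / (n.factorial : ℝ) ≤ M * h ^ (n + 1) := by
    have : c + h - c = h := by ring
    rw [this]
    exact div_le_self (by positivity) (by exact_mod_cast n.factorial_pos)
  calc |g (c + h) - ∑ k ∈ Finset.range (n + 1),
        h ^ k / (k.factorial : ℝ) * iteratedDeriv k g c|
      = ‖g (c + h) - ∑ k ∈ Finset.range (n + 1),
        h ^ k / (k.factorial : ℝ) * iteratedDeriv k g c‖ := rfl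
    _ ≤ M * (c + h - c) ^ (n + 1) / (n.factorial : ℝ) := hbnd
    _ ≤ M * h ^ (n + 1) := h2

lemma taylor_left {n : ℕ} {g : ℝ → ℝ} {J : Set ℝ} (hJ : IsOpen J)
    (hg : ContDiffOn ℝ (n + 1) g J) {c h M : ℝ} (h0 : 0 < h)
    (hsub : Icc (c - h) c ⊆ J)
    (hM : ∀ t ∈ Icc (c - h) c, |iteratedDeriv (n + 1) g t| ≤ M) :
    |g (c - h) - ∑ k ∈ Finset.range (n + 1),
        (-h) ^ k / (k.factorial : ℝ) * iteratedDeriv k g c| ≤ M * h ^ (n + 1) := by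
  set G : ℝ → ℝ := fun t => g (2 * c - t) with hG
  have hiter : ∀ (k : ℕ) (t : ℝ), iteratedDeriv k G t = (-1) ^ k * iteratedDeriv k g (2 * c - t) := by
    intro k t
    have e1 : G = fun s => (fun z => g (2 * c + z)) (-s) := by
      funext s; simp [hG, sub_eq_add_neg]
    rw [e1, iteratedDeriv_comp_neg k (fun z => g (2 * c + z)) t,
      iteratedDeriv_comp_const_add k g (2 * c)]
    rw [smul_eq_mul]
    ring_nf
  set J' : Set ℝ := (fun t => 2 * c - t) ⁻¹' J with hJ'
  have hJ'open : IsOpen J' := hJ.preimage (continuous_const.sub continuous_id)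
  have hGc : ContDiffOn ℝ (n + 1) G J' :=
    hg.comp ((contDiff_const.sub contDiff_id).contDiffOn) (fun t ht => ht)
  have hsub' : Icc c (c + h) ⊆ J' := by
    intro t ht
    have : 2 * c - t ∈ Icc (c - h) c := ⟨by linarith [ht.2], by linarith [ht.1]⟩
    exact hsub this
  have hM' : ∀ t ∈ Icc c (c + h), |iteratedDeriv (n + 1) G t| ≤ M := by
    intro t ht
    rw [hiter, abs_mul, abs_pow, abs_neg, abs_one, one_pow, one_mul]
    exact hM _ ⟨by linarith [ht.2], by linarith [ht.1]⟩
  have := taylor_right hJ'open hGc h0 hsub' hM'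
  have e2 : G (c + h) = g (c - h) := by simp only [hG]; ring_nf
  have e3 : ∀ k ∈ Finset.range (n + 1), h ^ k / (k.factorial : ℝ) * iteratedDeriv k G c
      = (-h) ^ k / (k.factorial : ℝ) * iteratedDeriv k g c := by
    intro k _
    rw [hiter]
    have : (2 : ℝ) * c - c = c := by ring
    rw [this, neg_pow]
    ring
  rw [e2, Finset.sum_congr rfl e3] at this
  exact this

lemma symm_taylor6 {g : ℝ → ℝ} {J : Set ℝ} (hJ : IsOpen J)
    (hg : ContDiffOn ℝ 6 g J) {c h M : ℝ} (h0 : 0 < h)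
    (hsub : Icc (c - h) (c + h) ⊆ J)
    (hM : ∀ t ∈ Icc (c - h) (c + h), |iteratedDeriv 6 g t| ≤ M) :
    |g (c + h) - 2 * g c + g (c - h) - h ^ 2 * iteratedDeriv 2 g c
        - h ^ 4 / 12 * iteratedDeriv 4 g c| ≤ 2 * M * h ^ 6 := by
  have hg6 : ContDiffOn ℝ ((5 : ℕ) + 1) g J := by exact_mod_cast hg
  have hR := taylor_right (n := 5) hJ hg6 h0
    (fun t ht => hsub ⟨by linarith [ht.1, h0.le], ht.2⟩)
    (fun t ht => hM t ⟨by linarith [ht.1, h0.le], ht.2⟩)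
  have hL := taylor_left (n := 5) hJ hg6 h0
    (fun t ht => hsub ⟨ht.1, by linarith [ht.2, h0.le]⟩)
    (fun t ht => hM t ⟨ht.1, by linarith [ht.2, h0.le]⟩)
  rw [show (5 + 1) = 6 from rfl] at hR hL
  have key : g (c + h) - 2 * g c + g (c - h) - h ^ 2 * iteratedDeriv 2 g c
        - h ^ 4 / 12 * iteratedDeriv 4 g c
      = (g (c + h) - ∑ k ∈ Finset.range (5 + 1),
            h ^ k / (k.factorial : ℝ) * iteratedDeriv k g c)
      + (g (c - h) - ∑ k ∈ Finset.range (5 + 1),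
            (-h) ^ k / (k.factorial : ℝ) * iteratedDeriv k g c) := by
    simp only [Finset.sum_range_succ, Finset.sum_range_zero, Nat.factorial,
      iteratedDeriv_zero]
    push_cast
    ring
  rw [key]
  calc |_ + _| ≤ _ + _ := abs_add_le _ _
    _ ≤ M * h ^ 6 + M * h ^ 6 := add_le_add hR hL
    _ = 2 * M * h ^ 6 := by ring

lemma symm_taylor4 {g : ℝ → ℝ} {J : Set ℝ} (hJ : IsOpen J)
    (hg : ContDiffOn ℝ 4 g J) {c h M : ℝ} (h0 : 0 < h)
    (hsub : Icc (c - h) (c + h) ⊆ J)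
    (hM : ∀ t ∈ Icc (c - h) (c + h), |iteratedDeriv 4 g t| ≤ M) :
    |g (c + h) - 2 * g c + g (c - h) - h ^ 2 * iteratedDeriv 2 g c| ≤ 2 * M * h ^ 4 := by
  have hg4 : ContDiffOn ℝ ((3 : ℕ) + 1) g J := by exact_mod_cast hg
  have hR := taylor_right (n := 3) hJ hg4 h0
    (fun t ht => hsub ⟨by linarith [ht.1, h0.le], ht.2⟩)
    (fun t ht => hM t ⟨by linarith [ht.1, h0.le], ht.2⟩)
  have hL := taylor_left (n := 3) hJ hg4 h0
    (fun t ht => hsub ⟨ht.1, by linarith [ht.2, h0.le]⟩)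
    (fun t ht => hM t ⟨ht.1, by linarith [ht.2, h0.le]⟩)
  rw [show (3 + 1) = 4 from rfl] at hR hL
  have key : g (c + h) - 2 * g c + g (c - h) - h ^ 2 * iteratedDeriv 2 g c
      = (g (c + h) - ∑ k ∈ Finset.range (3 + 1),
            h ^ k / (k.factorial : ℝ) * iteratedDeriv k g c)
      + (g (c - h) - ∑ k ∈ Finset.range (3 + 1),
            (-h) ^ k / (k.factorial : ℝ) * iteratedDeriv k g c) := by
    simp only [Finset.sum_range_succ, Finset.sum_range_zero, Nat.factorial,
      iteratedDeriv_zero]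
    push_cast
    ring
  rw [key]
  calc |_ + _| ≤ _ + _ := abs_add_le _ _
    _ ≤ M * h ^ 4 + M * h ^ 4 := add_le_add hR hL
    _ = 2 * M * h ^ 4 := by ring

lemma symm_taylor2 {g : ℝ → ℝ} {J : Set ℝ} (hJ : IsOpen J)
    (hg : ContDiffOn ℝ 2 g J) {c h M : ℝ} (h0 : 0 < h)
    (hsub : Icc (c - h) (c + h) ⊆ J)
    (hM : ∀ t ∈ Icc (c - h) (c + h), |iteratedDeriv 2 g t| ≤ M) :
    |g (c + h) - 2 * g c + g (c - h)| ≤ 2 * M * h ^ 2 := by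
  have hg2 : ContDiffOn ℝ ((1 : ℕ) + 1) g J := by exact_mod_cast hg
  have hR := taylor_right (n := 1) hJ hg2 h0
    (fun t ht => hsub ⟨by linarith [ht.1, h0.le], ht.2⟩)
    (fun t ht => hM t ⟨by linarith [ht.1, h0.le], ht.2⟩)
  have hL := taylor_left (n := 1) hJ hg2 h0
    (fun t ht => hsub ⟨ht.1, by linarith [ht.2, h0.le]⟩)
    (fun t ht => hM t ⟨ht.1, by linarith [ht.2, h0.le]⟩)
  rw [show (1 + 1) = 2 from rfl] at hR hL
  have key : g (c + h) - 2 * g c + g (c - h)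
      = (g (c + h) - ∑ k ∈ Finset.range (1 + 1),
            h ^ k / (k.factorial : ℝ) * iteratedDeriv k g c)
      + (g (c - h) - ∑ k ∈ Finset.range (1 + 1),
            (-h) ^ k / (k.factorial : ℝ) * iteratedDeriv k g c) := by
    simp only [Finset.sum_range_succ, Finset.sum_range_zero, Nat.factorial,
      iteratedDeriv_zero]
    push_cast
    ring
  rw [key]
  calc |_ + _| ≤ _ + _ := abs_add_le _ _
    _ ≤ M * h ^ 2 + M * h ^ 2 := add_le_add hR hL
    _ = 2 * M * h ^ 2 := by ring

noncomputable def pdI (w : ℝ × ℝ) (V : ℝ × ℝ → ℝ) : ℕ → ℝ × ℝ → ℝ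
  | 0 => V
  | n + 1 => fun p => fderiv ℝ (pdI w V n) p w

lemma pdI_add (w : ℝ × ℝ) (V : ℝ × ℝ → ℝ) (j k : ℕ) :
    pdI w V (j + k) = pdI w (pdI w V k) j := by
  induction j with
  | zero => rw [Nat.zero_add]; rfl
  | succ j ih =>
    show pdI w V (j + 1 + k) = _
    rw [show j + 1 + k = (j + k) + 1 by omega]
    show (fun p => fderiv ℝ (pdI w V (j + k)) p w) = _
    rw [ih]
    rfl

lemma pdI_smooth {V : ℝ × ℝ → ℝ} {s : Set (ℝ × ℝ)} (hs : IsOpen s) {m : ℕ}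
    (hV : ContDiffOn ℝ m V s) (w : ℝ × ℝ) :
    ∀ j k : ℕ, j + k ≤ m → ContDiffOn ℝ k (pdI w V j) s := by
  intro j
  induction j with
  | zero =>
    intro k hk
    exact hV.of_le (by exact_mod_cast (by omega : k ≤ m))
  | succ j ih =>
    intro k hk
    have h1 : ContDiffOn ℝ (k + 1 : ℕ) (pdI w V j) s := ih (k + 1) (by omega)
    have h2 : ContDiffOn ℝ k (fderiv ℝ (pdI w V j)) s :=
      h1.fderiv_of_isOpen hs (by exact_mod_cast le_refl (k + 1 : ℕ))
    exact h2.clm_apply contDiffOn_const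

lemma hasDerivAt_slice_x {V : ℝ × ℝ → ℝ} {p : ℝ × ℝ} (hd : DifferentiableAt ℝ V p) :
    HasDerivAt (fun t => V (t, p.2)) (fderiv ℝ V p (1, 0)) p.1 := by
  have h1 : HasDerivAt (fun t : ℝ => ((t, p.2) : ℝ × ℝ)) (((1 : ℝ), (0 : ℝ)) : ℝ × ℝ) p.1 :=
    (hasDerivAt_id p.1).prodMk (hasDerivAt_const p.1 p.2)
  exact hd.hasFDerivAt.comp_hasDerivAt p.1 h1

lemma hasDerivAt_slice_y {V : ℝ × ℝ → ℝ} {p : ℝ × ℝ} (hd : DifferentiableAt ℝ V p) :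
    HasDerivAt (fun t => V (p.1, t)) (fderiv ℝ V p (0, 1)) p.2 := by
  have h1 : HasDerivAt (fun t : ℝ => ((p.1, t) : ℝ × ℝ)) (((0 : ℝ), (1 : ℝ)) : ℝ × ℝ) p.2 :=
    (hasDerivAt_const p.2 p.1).prodMk (hasDerivAt_id p.2)
  exact hd.hasFDerivAt.comp_hasDerivAt p.2 h1

lemma slice_x_iter {V : ℝ × ℝ → ℝ} {s : Set (ℝ × ℝ)} (hs : IsOpen s) {m : ℕ}
    (hV : ContDiffOn ℝ m V s) :
    ∀ j, j ≤ m → ∀ p ∈ s, iteratedDeriv j (fun t => V (t, p.2)) p.1 = pdI (1, 0) V j p := by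
  intro j
  induction j with
  | zero => intro _ p hp; rfl
  | succ j ih =>
    intro hj p hp
    rw [iteratedDeriv_succ]
    have hopen : IsOpen {t : ℝ | (t, p.2) ∈ s} :=
      hs.preimage (continuous_id.prodMk continuous_const)
    have heq : (iteratedDeriv j (fun t' => V (t', p.2)))
        =ᶠ[𝓝 p.1] (fun t => pdI (1, 0) V j (t, p.2)) := by
      filter_upwards [hopen.mem_nhds (show p.1 ∈ {t : ℝ | (t, p.2) ∈ s} from hp)] with t ht
      exact ih (le_trans (Nat.le_succ j) hj) (t, p.2) ht
    rw [heq.deriv_eq]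
    have h1 : ContDiffOn ℝ (1 : ℕ) (pdI (1, 0) V j) s := pdI_smooth hs hV _ j 1 (by omega)
    have hdiff : DifferentiableAt ℝ (pdI (1, 0) V j) p :=
      (h1.contDiffAt (hs.mem_nhds hp)).differentiableAt (by norm_num)
    exact (hasDerivAt_slice_x hdiff).deriv

lemma slice_y_iter {V : ℝ × ℝ → ℝ} {s : Set (ℝ × ℝ)} (hs : IsOpen s) {m : ℕ}
    (hV : ContDiffOn ℝ m V s) :
    ∀ j, j ≤ m → ∀ p ∈ s, iteratedDeriv j (fun t => V (p.1, t)) p.2 = pdI (0, 1) V j p := by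
  intro j
  induction j with
  | zero => intro _ p hp; rfl
  | succ j ih =>
    intro hj p hp
    rw [iteratedDeriv_succ]
    have hopen : IsOpen {t : ℝ | (p.1, t) ∈ s} :=
      hs.preimage (continuous_const.prodMk continuous_id)
    have heq : (iteratedDeriv j (fun t' => V (p.1, t')))
        =ᶠ[𝓝 p.2] (fun t => pdI (0, 1) V j (p.1, t)) := by
      filter_upwards [hopen.mem_nhds (show p.2 ∈ {t : ℝ | (p.1, t) ∈ s} from hp)] with t ht
      exact ih (le_trans (Nat.le_succ j) hj) (p.1, t) ht
    rw [heq.deriv_eq]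
    have h1 : ContDiffOn ℝ (1 : ℕ) (pdI (0, 1) V j) s := pdI_smooth hs hV _ j 1 (by omega)
    have hdiff : DifferentiableAt ℝ (pdI (0, 1) V j) p :=
      (h1.contDiffAt (hs.mem_nhds hp)).differentiableAt (by norm_num)
    exact (hasDerivAt_slice_y hdiff).deriv

lemma slice_x_smooth {V : ℝ × ℝ → ℝ} {s : Set (ℝ × ℝ)} {m : ℕ}
    (hV : ContDiffOn ℝ m V s) (b : ℝ) :
    ContDiffOn ℝ m (fun t => V (t, b)) {t | (t, b) ∈ s} :=
  hV.comp ((contDiff_id.prodMk contDiff_const).contDiffOn) (fun t ht => ht)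

lemma slice_y_smooth {V : ℝ × ℝ → ℝ} {s : Set (ℝ × ℝ)} {m : ℕ}
    (hV : ContDiffOn ℝ m V s) (a : ℝ) :
    ContDiffOn ℝ m (fun t => V (a, t)) {t | (a, t) ∈ s} :=
  hV.comp ((contDiff_const.prodMk contDiff_id).contDiffOn) (fun t ht => ht)

lemma iDW_open {n : ℕ} {f : ℝ → ℝ} {J : Set ℝ} (hJ : IsOpen J) {x : ℝ} (hx : x ∈ J) :
    iteratedDerivWithin n f J x = iteratedDeriv n f x := by
  rw [iteratedDerivWithin_eq_iteratedFDerivWithin, iteratedDeriv_eq_iteratedFDeriv,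
    iteratedFDerivWithin_of_isOpen n hJ hx]

lemma iteratedDeriv_add_open {n : ℕ} {f g : ℝ → ℝ} {J : Set ℝ} (hJ : IsOpen J) {x : ℝ}
    (hx : x ∈ J) (hf : ContDiffOn ℝ n f J) (hg : ContDiffOn ℝ n g J) :
    iteratedDeriv n (fun t => f t + g t) x = iteratedDeriv n f x + iteratedDeriv n g x := by
  have h1 : iteratedDerivWithin n (f + g) J x =
      iteratedDerivWithin n f J x + iteratedDerivWithin n g J x :=
    iteratedDerivWithin_add hx hJ.uniqueDiffOn (hf.contDiffWithinAt hx) (hg.contDiffWithinAt hx)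
  rw [← iDW_open hJ hx (n := n) (f := fun t => f t + g t), ← iDW_open hJ hx (n := n) (f := f),
    ← iDW_open hJ hx (n := n) (f := g), ← h1]
  rfl


set_option maxHeartbeats 1600000 in
/-- Fourth-order consistency of the Mehrstellen scheme: if `u` is `C⁶`, `f` is
`C⁴` and `−Δu = f` near `(x, y)`, then
`(1/(6h²))·(20u − 4∑_edge u − ∑_corner u) − (1/12)·(8f + ∑_edge f) = O(h⁴)`. -/
theorem mehrstellen_fourth_order_consistency
    (u f : ℝ → ℝ → ℝ) (x y ε : ℝ) (hε : 0 < ε)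
    (hu : ContDiffOn ℝ 6 (fun p : ℝ × ℝ => u p.1 p.2) (Metric.ball (x, y) ε))
    (hf : ContDiffOn ℝ 4 (fun p : ℝ × ℝ => f p.1 p.2) (Metric.ball (x, y) ε))
    (hpde : ∀ a b : ℝ, (a, b) ∈ Metric.ball (x, y) ε → -(lap2 u a b) = f a b) :
    ∃ C : ℝ, ∀ h : ℝ, 0 < h → 2 * h < ε →
      |(1 / (6 * h ^ 2)) *
          (20 * u x y
            - 4 * (u (x + h) y + u (x - h) y + u x (y + h) + u x (y - h))
            - (u (x + h) (y + h) + u (x + h) (y - h)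
                + u (x - h) (y + h) + u (x - h) (y - h)))
        - (1 / 12) * (8 * f x y + f (x + h) y + f (x - h) y
            + f x (y + h) + f x (y - h))| ≤ C * h ^ 4 := by
  have hBopen : IsOpen (Metric.ball ((x, y) : ℝ × ℝ) ε) := Metric.isOpen_ball
  set B := Metric.ball ((x, y) : ℝ × ℝ) ε with hBdef
  set UU : ℝ × ℝ → ℝ := fun p => u p.1 p.2 with hUUdef
  set FF : ℝ × ℝ → ℝ := fun p => f p.1 p.2 with hFFdef
  have smU : ContDiffOn ℝ ((6 : ℕ) : ℕ∞) UU B := by exact_mod_cast hu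
  have smF : ContDiffOn ℝ ((4 : ℕ) : ℕ∞) FF B := by exact_mod_cast hf
  have hmemB : ∀ a b : ℝ, |a - x| < ε → |b - y| < ε → ((a, b) : ℝ × ℝ) ∈ B := by
    intro a b h1 h2
    rw [hBdef, Metric.mem_ball, Prod.dist_eq]
    exact max_lt (by rwa [Real.dist_eq]) (by rwa [Real.dist_eq])
  have hmemK : ∀ a b : ℝ, |a - x| ≤ ε / 2 → |b - y| ≤ ε / 2 →
      ((a, b) : ℝ × ℝ) ∈ Metric.closedBall ((x, y) : ℝ × ℝ) (ε / 2) := by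
    intro a b h1 h2
    rw [Metric.mem_closedBall, Prod.dist_eq]
    exact max_le (by rwa [Real.dist_eq]) (by rwa [Real.dist_eq])
  have hKB : Metric.closedBall ((x, y) : ℝ × ℝ) (ε / 2) ⊆ B := by
    rw [hBdef]; exact Metric.closedBall_subset_ball (by linarith)
  have hKc : IsCompact (Metric.closedBall ((x, y) : ℝ × ℝ) (ε / 2)) :=
    isCompact_closedBall _ _
  have sVX2 : ContDiffOn ℝ ((4 : ℕ) : ℕ∞) (pdI (1, 0) UU 2) B :=
    pdI_smooth hBopen smU (1, 0) 2 4 (by omega)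
  have sVX4 : ContDiffOn ℝ ((2 : ℕ) : ℕ∞) (pdI (1, 0) UU 4) B :=
    pdI_smooth hBopen smU (1, 0) 4 2 (by omega)
  have sVY2 : ContDiffOn ℝ ((4 : ℕ) : ℕ∞) (pdI (0, 1) UU 2) B :=
    pdI_smooth hBopen smU (0, 1) 2 4 (by omega)
  have sVY4 : ContDiffOn ℝ ((2 : ℕ) : ℕ∞) (pdI (0, 1) UU 4) B :=
    pdI_smooth hBopen smU (0, 1) 4 2 (by omega)
  obtain ⟨M1, hM1⟩ := hKc.exists_bound_of_continuousOn
    ((pdI_smooth hBopen smU (1, 0) 6 0 (by omega)).continuousOn.mono hKB)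
  obtain ⟨M2, hM2⟩ := hKc.exists_bound_of_continuousOn
    ((pdI_smooth hBopen smU (0, 1) 6 0 (by omega)).continuousOn.mono hKB)
  obtain ⟨M3, hM3⟩ := hKc.exists_bound_of_continuousOn
    ((pdI_smooth hBopen sVX2 (0, 1) 4 0 (by omega)).continuousOn.mono hKB)
  obtain ⟨M4, hM4⟩ := hKc.exists_bound_of_continuousOn
    ((pdI_smooth hBopen sVX4 (0, 1) 2 0 (by omega)).continuousOn.mono hKB)
  obtain ⟨M5, hM5⟩ := hKc.exists_bound_of_continuousOn
    ((pdI_smooth hBopen sVY2 (1, 0) 4 0 (by omega)).continuousOn.mono hKB)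
  obtain ⟨M6, hM6⟩ := hKc.exists_bound_of_continuousOn
    ((pdI_smooth hBopen sVY4 (1, 0) 2 0 (by omega)).continuousOn.mono hKB)
  obtain ⟨M7, hM7⟩ := hKc.exists_bound_of_continuousOn
    ((pdI_smooth hBopen smF (1, 0) 4 0 (by omega)).continuousOn.mono hKB)
  obtain ⟨M8, hM8⟩ := hKc.exists_bound_of_continuousOn
    ((pdI_smooth hBopen smF (0, 1) 4 0 (by omega)).continuousOn.mono hKB)
  set a2 := pdI (1, 0) UU 2 (x, y) with ha2
  set a4 := pdI (1, 0) UU 4 (x, y) with ha4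
  set b2 := pdI (0, 1) UU 2 (x, y) with hb2
  set b4 := pdI (0, 1) UU 4 (x, y) with hb4
  set qxy := pdI (1, 0) (pdI (0, 1) UU 2) 2 (x, y) with hqxy
  set qyx := pdI (0, 1) (pdI (1, 0) UU 2) 2 (x, y) with hqyx
  refine ⟨(2 * M1 + 2 * M2) + ((2 * M3 + M4 / 6 + 8 * M1) + (2 * M5 + M6 / 6 + 8 * M2)) / 12
      + (2 * M7 + 2 * M8) / 12, ?_⟩
  intro h h0 hhε
  have hh2 : h ≤ ε / 2 := by linarith
  have hhε' : h < ε := by linarith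
  have hxx : |x - x| < ε := by simpa using hε
  have hyy : |y - y| < ε := by simpa using hε
  have hc : ((x, y) : ℝ × ℝ) ∈ B := hmemB x y hxx hyy
  -- x-direction sixth-order expansions at heights b
  have TX : ∀ b : ℝ, |b - y| ≤ h →
      |u (x + h) b - 2 * u x b + u (x - h) b - h ^ 2 * pdI (1, 0) UU 2 (x, b)
        - h ^ 4 / 12 * pdI (1, 0) UU 4 (x, b)| ≤ 2 * M1 * h ^ 6 := by
    intro b hb
    have hbe : |b - y| < ε := lt_of_le_of_lt hb hhε'
    have hJo : IsOpen {t : ℝ | ((t, b) : ℝ × ℝ) ∈ B} :=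
      hBopen.preimage (continuous_id.prodMk continuous_const)
    have hsub : Icc (x - h) (x + h) ⊆ {t : ℝ | ((t, b) : ℝ × ℝ) ∈ B} := by
      intro t ht
      have htx : |t - x| ≤ h := abs_le.mpr ⟨by linarith [ht.1], by linarith [ht.2]⟩
      exact hmemB t b (lt_of_le_of_lt htx hhε') hbe
    have hsl : ContDiffOn ℝ ((6 : ℕ) : ℕ∞) (fun t => UU (t, b))
        {t : ℝ | ((t, b) : ℝ × ℝ) ∈ B} := slice_x_smooth smU b
    have hMb : ∀ t ∈ Icc (x - h) (x + h), |iteratedDeriv 6 (fun t' => UU (t', b)) t| ≤ M1 := by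
      intro t ht
      have htx : |t - x| ≤ h := abs_le.mpr ⟨by linarith [ht.1], by linarith [ht.2]⟩
      have e : iteratedDeriv 6 (fun t' => UU (t', b)) t = pdI (1, 0) UU 6 (t, b) :=
        slice_x_iter hBopen smU 6 le_rfl (t, b) (hmemB t b (lt_of_le_of_lt htx hhε') hbe)
      rw [e]
      simpa using hM1 (t, b) (hmemK t b (htx.trans hh2) (hb.trans hh2))
    have hres := symm_taylor6 (g := fun t => UU (t, b)) hJo (by exact_mod_cast hsl) h0 hsub hMb
    have e2 : iteratedDeriv 2 (fun t => UU (t, b)) x = pdI (1, 0) UU 2 (x, b) :=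
      slice_x_iter hBopen smU 2 (by omega) (x, b) (hmemB x b hxx hbe)
    have e4 : iteratedDeriv 4 (fun t => UU (t, b)) x = pdI (1, 0) UU 4 (x, b) :=
      slice_x_iter hBopen smU 4 (by omega) (x, b) (hmemB x b hxx hbe)
    rw [e2, e4] at hres
    exact hres
  -- y-direction sixth-order expansions at abscissas a
  have TY : ∀ a : ℝ, |a - x| ≤ h →
      |u a (y + h) - 2 * u a y + u a (y - h) - h ^ 2 * pdI (0, 1) UU 2 (a, y)
        - h ^ 4 / 12 * pdI (0, 1) UU 4 (a, y)| ≤ 2 * M2 * h ^ 6 := by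
    intro a ha
    have hae : |a - x| < ε := lt_of_le_of_lt ha hhε'
    have hJo : IsOpen {t : ℝ | ((a, t) : ℝ × ℝ) ∈ B} :=
      hBopen.preimage (continuous_const.prodMk continuous_id)
    have hsub : Icc (y - h) (y + h) ⊆ {t : ℝ | ((a, t) : ℝ × ℝ) ∈ B} := by
      intro t ht
      have hty : |t - y| ≤ h := abs_le.mpr ⟨by linarith [ht.1], by linarith [ht.2]⟩
      exact hmemB a t hae (lt_of_le_of_lt hty hhε')
    have hsl : ContDiffOn ℝ ((6 : ℕ) : ℕ∞) (fun t => UU (a, t))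
        {t : ℝ | ((a, t) : ℝ × ℝ) ∈ B} := slice_y_smooth smU a
    have hMb : ∀ t ∈ Icc (y - h) (y + h), |iteratedDeriv 6 (fun t' => UU (a, t')) t| ≤ M2 := by
      intro t ht
      have hty : |t - y| ≤ h := abs_le.mpr ⟨by linarith [ht.1], by linarith [ht.2]⟩
      have e : iteratedDeriv 6 (fun t' => UU (a, t')) t = pdI (0, 1) UU 6 (a, t) :=
        slice_y_iter hBopen smU 6 le_rfl (a, t) (hmemB a t hae (lt_of_le_of_lt hty hhε'))
      rw [e]
      simpa using hM2 (a, t) (hmemK a t (ha.trans hh2) (hty.trans hh2))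
    have hres := symm_taylor6 (g := fun t => UU (a, t)) hJo (by exact_mod_cast hsl) h0 hsub hMb
    have e2 : iteratedDeriv 2 (fun t => UU (a, t)) y = pdI (0, 1) UU 2 (a, y) :=
      slice_y_iter hBopen smU 2 (by omega) (a, y) (hmemB a y hae hyy)
    have e4 : iteratedDeriv 4 (fun t => UU (a, t)) y = pdI (0, 1) UU 4 (a, y) :=
      slice_y_iter hBopen smU 4 (by omega) (a, y) (hmemB a y hae hyy)
    rw [e2, e4] at hres
    exact hres
  -- inner second differences of the partial derivatives, in the transverse direction
  have hsubY : Icc (y - h) (y + h) ⊆ {t : ℝ | ((x, t) : ℝ × ℝ) ∈ B} := by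
    intro t ht
    have hty : |t - y| ≤ h := abs_le.mpr ⟨by linarith [ht.1], by linarith [ht.2]⟩
    exact hmemB x t hxx (lt_of_le_of_lt hty hhε')
  have hsubX : Icc (x - h) (x + h) ⊆ {t : ℝ | ((t, y) : ℝ × ℝ) ∈ B} := by
    intro t ht
    have htx : |t - x| ≤ h := abs_le.mpr ⟨by linarith [ht.1], by linarith [ht.2]⟩
    exact hmemB t y (lt_of_le_of_lt htx hhε') hyy
  have hJoY : IsOpen {t : ℝ | ((x, t) : ℝ × ℝ) ∈ B} :=
    hBopen.preimage (continuous_const.prodMk continuous_id)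
  have hJoX : IsOpen {t : ℝ | ((t, y) : ℝ × ℝ) ∈ B} :=
    hBopen.preimage (continuous_id.prodMk continuous_const)
  have T4 : |pdI (1, 0) UU 2 (x, y + h) - 2 * a2 + pdI (1, 0) UU 2 (x, y - h)
      - h ^ 2 * qyx| ≤ 2 * M3 * h ^ 4 := by
    have hsl : ContDiffOn ℝ ((4 : ℕ) : ℕ∞) (fun t => pdI (1, 0) UU 2 (x, t))
        {t : ℝ | ((x, t) : ℝ × ℝ) ∈ B} := slice_y_smooth sVX2 x
    have hMb : ∀ t ∈ Icc (y - h) (y + h),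
        |iteratedDeriv 4 (fun t' => pdI (1, 0) UU 2 (x, t')) t| ≤ M3 := by
      intro t ht
      have hty : |t - y| ≤ h := abs_le.mpr ⟨by linarith [ht.1], by linarith [ht.2]⟩
      have e : iteratedDeriv 4 (fun t' => pdI (1, 0) UU 2 (x, t')) t
          = pdI (0, 1) (pdI (1, 0) UU 2) 4 (x, t) :=
        slice_y_iter hBopen sVX2 4 le_rfl (x, t) (hmemB x t hxx (lt_of_le_of_lt hty hhε'))
      rw [e]
      simpa using hM3 (x, t) (hmemK x t (by simpa using (by linarith : (0:ℝ) ≤ ε/2)) (hty.trans hh2))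
    have hres := symm_taylor4 (g := fun t => pdI (1, 0) UU 2 (x, t)) hJoY
      (by exact_mod_cast hsl) h0 hsubY hMb
    have e2 : iteratedDeriv 2 (fun t => pdI (1, 0) UU 2 (x, t)) y = qyx :=
      slice_y_iter hBopen sVX2 2 (by omega) (x, y) hc
    rw [e2] at hres
    exact hres
  have T5 : |pdI (1, 0) UU 4 (x, y + h) - 2 * a4 + pdI (1, 0) UU 4 (x, y - h)|
      ≤ 2 * M4 * h ^ 2 := by
    have hsl : ContDiffOn ℝ ((2 : ℕ) : ℕ∞) (fun t => pdI (1, 0) UU 4 (x, t))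
        {t : ℝ | ((x, t) : ℝ × ℝ) ∈ B} := slice_y_smooth sVX4 x
    have hMb : ∀ t ∈ Icc (y - h) (y + h),
        |iteratedDeriv 2 (fun t' => pdI (1, 0) UU 4 (x, t')) t| ≤ M4 := by
      intro t ht
      have hty : |t - y| ≤ h := abs_le.mpr ⟨by linarith [ht.1], by linarith [ht.2]⟩
      have e : iteratedDeriv 2 (fun t' => pdI (1, 0) UU 4 (x, t')) t
          = pdI (0, 1) (pdI (1, 0) UU 4) 2 (x, t) :=
        slice_y_iter hBopen sVX4 2 le_rfl (x, t) (hmemB x t hxx (lt_of_le_of_lt hty hhε'))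
      rw [e]
      simpa using hM4 (x, t) (hmemK x t (by simpa using (by linarith : (0:ℝ) ≤ ε/2)) (hty.trans hh2))
    exact symm_taylor2 (g := fun t => pdI (1, 0) UU 4 (x, t)) hJoY
      (by exact_mod_cast hsl) h0 hsubY hMb
  have T4' : |pdI (0, 1) UU 2 (x + h, y) - 2 * b2 + pdI (0, 1) UU 2 (x - h, y)
      - h ^ 2 * qxy| ≤ 2 * M5 * h ^ 4 := by
    have hsl : ContDiffOn ℝ ((4 : ℕ) : ℕ∞) (fun t => pdI (0, 1) UU 2 (t, y))
        {t : ℝ | ((t, y) : ℝ × ℝ) ∈ B} := slice_x_smooth sVY2 y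
    have hMb : ∀ t ∈ Icc (x - h) (x + h),
        |iteratedDeriv 4 (fun t' => pdI (0, 1) UU 2 (t', y)) t| ≤ M5 := by
      intro t ht
      have htx : |t - x| ≤ h := abs_le.mpr ⟨by linarith [ht.1], by linarith [ht.2]⟩
      have e : iteratedDeriv 4 (fun t' => pdI (0, 1) UU 2 (t', y)) t
          = pdI (1, 0) (pdI (0, 1) UU 2) 4 (t, y) :=
        slice_x_iter hBopen sVY2 4 le_rfl (t, y) (hmemB t y (lt_of_le_of_lt htx hhε') hyy)
      rw [e]
      simpa using hM5 (t, y) (hmemK t y (htx.trans hh2) (by simpa using (by linarith : (0:ℝ) ≤ ε/2)))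
    have hres := symm_taylor4 (g := fun t => pdI (0, 1) UU 2 (t, y)) hJoX
      (by exact_mod_cast hsl) h0 hsubX hMb
    have e2 : iteratedDeriv 2 (fun t => pdI (0, 1) UU 2 (t, y)) x = qxy :=
      slice_x_iter hBopen sVY2 2 (by omega) (x, y) hc
    rw [e2] at hres
    exact hres
  have T5' : |pdI (0, 1) UU 4 (x + h, y) - 2 * b4 + pdI (0, 1) UU 4 (x - h, y)|
      ≤ 2 * M6 * h ^ 2 := by
    have hsl : ContDiffOn ℝ ((2 : ℕ) : ℕ∞) (fun t => pdI (0, 1) UU 4 (t, y))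
        {t : ℝ | ((t, y) : ℝ × ℝ) ∈ B} := slice_x_smooth sVY4 y
    have hMb : ∀ t ∈ Icc (x - h) (x + h),
        |iteratedDeriv 2 (fun t' => pdI (0, 1) UU 4 (t', y)) t| ≤ M6 := by
      intro t ht
      have htx : |t - x| ≤ h := abs_le.mpr ⟨by linarith [ht.1], by linarith [ht.2]⟩
      have e : iteratedDeriv 2 (fun t' => pdI (0, 1) UU 4 (t', y)) t
          = pdI (1, 0) (pdI (0, 1) UU 4) 2 (t, y) :=
        slice_x_iter hBopen sVY4 2 le_rfl (t, y) (hmemB t y (lt_of_le_of_lt htx hhε') hyy)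
      rw [e]
      simpa using hM6 (t, y) (hmemK t y (htx.trans hh2) (by simpa using (by linarith : (0:ℝ) ≤ ε/2)))
    exact symm_taylor2 (g := fun t => pdI (0, 1) UU 4 (t, y)) hJoX
      (by exact_mod_cast hsl) h0 hsubX hMb
  have T6 : |f (x + h) y - 2 * f x y + f (x - h) y - h ^ 2 * pdI (1, 0) FF 2 (x, y)|
      ≤ 2 * M7 * h ^ 4 := by
    have hsl : ContDiffOn ℝ ((4 : ℕ) : ℕ∞) (fun t => FF (t, y))
        {t : ℝ | ((t, y) : ℝ × ℝ) ∈ B} := slice_x_smooth smF y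
    have hMb : ∀ t ∈ Icc (x - h) (x + h),
        |iteratedDeriv 4 (fun t' => FF (t', y)) t| ≤ M7 := by
      intro t ht
      have htx : |t - x| ≤ h := abs_le.mpr ⟨by linarith [ht.1], by linarith [ht.2]⟩
      have e : iteratedDeriv 4 (fun t' => FF (t', y)) t = pdI (1, 0) FF 4 (t, y) :=
        slice_x_iter hBopen smF 4 le_rfl (t, y) (hmemB t y (lt_of_le_of_lt htx hhε') hyy)
      rw [e]
      simpa using hM7 (t, y) (hmemK t y (htx.trans hh2) (by simpa using (by linarith : (0:ℝ) ≤ ε/2)))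
    have hres := symm_taylor4 (g := fun t => FF (t, y)) hJoX
      (by exact_mod_cast hsl) h0 hsubX hMb
    have e2 : iteratedDeriv 2 (fun t => FF (t, y)) x = pdI (1, 0) FF 2 (x, y) :=
      slice_x_iter hBopen smF 2 (by omega) (x, y) hc
    rw [e2] at hres
    exact hres
  have T7 : |f x (y + h) - 2 * f x y + f x (y - h) - h ^ 2 * pdI (0, 1) FF 2 (x, y)|
      ≤ 2 * M8 * h ^ 4 := by
    have hsl : ContDiffOn ℝ ((4 : ℕ) : ℕ∞) (fun t => FF (x, t))
        {t : ℝ | ((x, t) : ℝ × ℝ) ∈ B} := slice_y_smooth smF x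
    have hMb : ∀ t ∈ Icc (y - h) (y + h),
        |iteratedDeriv 4 (fun t' => FF (x, t')) t| ≤ M8 := by
      intro t ht
      have hty : |t - y| ≤ h := abs_le.mpr ⟨by linarith [ht.1], by linarith [ht.2]⟩
      have e : iteratedDeriv 4 (fun t' => FF (x, t')) t = pdI (0, 1) FF 4 (x, t) :=
        slice_y_iter hBopen smF 4 le_rfl (x, t) (hmemB x t hxx (lt_of_le_of_lt hty hhε'))
      rw [e]
      simpa using hM8 (x, t) (hmemK x t (by simpa using (by linarith : (0:ℝ) ≤ ε/2)) (hty.trans hh2))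
    have hres := symm_taylor4 (g := fun t => FF (x, t)) hJoY
      (by exact_mod_cast hsl) h0 hsubY hMb
    have e2 : iteratedDeriv 2 (fun t => FF (x, t)) y = pdI (0, 1) FF 2 (x, y) :=
      slice_y_iter hBopen smF 2 (by omega) (x, y) hc
    rw [e2] at hres
    exact hres
  -- the PDE at the center and its second derivatives
  have hp0 : f x y = -(a2 + b2) := by
    rw [← hpde x y hc]
    have e1 : iteratedDeriv 2 (fun t => u t y) x = a2 :=
      slice_x_iter hBopen smU 2 (by omega) (x, y) hc
    have e2 : iteratedDeriv 2 (fun t => u x t) y = b2 :=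
      slice_y_iter hBopen smU 2 (by omega) (x, y) hc
    rw [lap2, e1, e2]
  have hp1 : pdI (1, 0) FF 2 (x, y) = -(a4 + qxy) := by
    have heq : (fun t => FF (t, y)) =ᶠ[𝓝 x]
        (fun t => -(pdI (1, 0) UU 2 (t, y) + pdI (0, 1) UU 2 (t, y))) := by
      filter_upwards [hJoX.mem_nhds (show x ∈ {t : ℝ | ((t, y) : ℝ × ℝ) ∈ B} from hc)] with t ht
      have e1 : iteratedDeriv 2 (fun s => u s y) t = pdI (1, 0) UU 2 (t, y) :=
        slice_x_iter hBopen smU 2 (by omega) (t, y) ht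
      have e2 : iteratedDeriv 2 (fun s => u t s) y = pdI (0, 1) UU 2 (t, y) :=
        slice_y_iter hBopen smU 2 (by omega) (t, y) ht
      show FF (t, y) = _
      calc FF (t, y) = -(lap2 u t y) := (hpde t y ht).symm
        _ = _ := by rw [lap2, e1, e2]
    have hstep : iteratedDeriv 2 (fun t => FF (t, y)) x = pdI (1, 0) FF 2 (x, y) :=
      slice_x_iter hBopen smF 2 (by omega) (x, y) hc
    rw [← hstep, Filter.EventuallyEq.iteratedDeriv_eq 2 heq]
    have hneg : iteratedDeriv 2
        (fun t => -(pdI (1, 0) UU 2 (t, y) + pdI (0, 1) UU 2 (t, y))) x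
        = -(iteratedDeriv 2 (fun t => pdI (1, 0) UU 2 (t, y) + pdI (0, 1) UU 2 (t, y)) x) :=
      iteratedDeriv_neg 2 _ x
    rw [hneg]
    have s1 : ContDiffOn ℝ ((2 : ℕ) : ℕ∞) (fun t => pdI (1, 0) UU 2 (t, y))
        {t : ℝ | ((t, y) : ℝ × ℝ) ∈ B} :=
      (slice_x_smooth sVX2 y).of_le (by norm_cast)
    have s2 : ContDiffOn ℝ ((2 : ℕ) : ℕ∞) (fun t => pdI (0, 1) UU 2 (t, y))
        {t : ℝ | ((t, y) : ℝ × ℝ) ∈ B} :=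
      (slice_x_smooth sVY2 y).of_le (by norm_cast)
    rw [iteratedDeriv_add_open hJoX (show x ∈ {t : ℝ | ((t, y) : ℝ × ℝ) ∈ B} from hc) s1 s2]
    have e3 : iteratedDeriv 2 (fun t => pdI (1, 0) UU 2 (t, y)) x
        = pdI (1, 0) (pdI (1, 0) UU 2) 2 (x, y) :=
      slice_x_iter hBopen sVX2 2 (by omega) (x, y) hc
    have e5 : iteratedDeriv 2 (fun t => pdI (0, 1) UU 2 (t, y)) x = qxy :=
      slice_x_iter hBopen sVY2 2 (by omega) (x, y) hc
    have e4 : pdI (1, 0) (pdI (1, 0) UU 2) 2 (x, y) = a4 := by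
      rw [ha4, show (4 : ℕ) = 2 + 2 from rfl, pdI_add]
    rw [e3, e5, e4]
  have hp2 : pdI (0, 1) FF 2 (x, y) = -(qyx + b4) := by
    have heq : (fun t => FF (x, t)) =ᶠ[𝓝 y]
        (fun t => -(pdI (1, 0) UU 2 (x, t) + pdI (0, 1) UU 2 (x, t))) := by
      filter_upwards [hJoY.mem_nhds (show y ∈ {t : ℝ | ((x, t) : ℝ × ℝ) ∈ B} from hc)] with t ht
      have e1 : iteratedDeriv 2 (fun s => u s t) x = pdI (1, 0) UU 2 (x, t) :=
        slice_x_iter hBopen smU 2 (by omega) (x, t) ht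
      have e2 : iteratedDeriv 2 (fun s => u x s) t = pdI (0, 1) UU 2 (x, t) :=
        slice_y_iter hBopen smU 2 (by omega) (x, t) ht
      show FF (x, t) = _
      calc FF (x, t) = -(lap2 u x t) := (hpde x t ht).symm
        _ = _ := by rw [lap2, e1, e2]
    have hstep : iteratedDeriv 2 (fun t => FF (x, t)) y = pdI (0, 1) FF 2 (x, y) :=
      slice_y_iter hBopen smF 2 (by omega) (x, y) hc
    rw [← hstep, Filter.EventuallyEq.iteratedDeriv_eq 2 heq]
    have hneg : iteratedDeriv 2
        (fun t => -(pdI (1, 0) UU 2 (x, t) + pdI (0, 1) UU 2 (x, t))) y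
        = -(iteratedDeriv 2 (fun t => pdI (1, 0) UU 2 (x, t) + pdI (0, 1) UU 2 (x, t)) y) :=
      iteratedDeriv_neg 2 _ y
    rw [hneg]
    have s1 : ContDiffOn ℝ ((2 : ℕ) : ℕ∞) (fun t => pdI (1, 0) UU 2 (x, t))
        {t : ℝ | ((x, t) : ℝ × ℝ) ∈ B} :=
      (slice_y_smooth sVX2 x).of_le (by norm_cast)
    have s2 : ContDiffOn ℝ ((2 : ℕ) : ℕ∞) (fun t => pdI (0, 1) UU 2 (x, t))
        {t : ℝ | ((x, t) : ℝ × ℝ) ∈ B} :=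
      (slice_y_smooth sVY2 x).of_le (by norm_cast)
    rw [iteratedDeriv_add_open hJoY (show y ∈ {t : ℝ | ((x, t) : ℝ × ℝ) ∈ B} from hc) s1 s2]
    have e3 : iteratedDeriv 2 (fun t => pdI (1, 0) UU 2 (x, t)) y = qyx :=
      slice_y_iter hBopen sVX2 2 (by omega) (x, y) hc
    have e5 : iteratedDeriv 2 (fun t => pdI (0, 1) UU 2 (x, t)) y
        = pdI (0, 1) (pdI (0, 1) UU 2) 2 (x, y) :=
      slice_y_iter hBopen sVY2 2 (by omega) (x, y) hc
    have e4 : pdI (0, 1) (pdI (0, 1) UU 2) 2 (x, y) = b4 := by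
      rw [hb4, show (4 : ℕ) = 2 + 2 from rfl, pdI_add]
    rw [e3, e5, e4]
  -- assembling the mixed second difference estimates
  have hbp : |y + h - y| ≤ h := by
    rw [show y + h - y = h by ring, abs_of_pos h0]
  have hbm : |y - h - y| ≤ h := by
    rw [show y - h - y = -h by ring, abs_neg, abs_of_pos h0]
  have hap : |x + h - x| ≤ h := by
    rw [show x + h - x = h by ring, abs_of_pos h0]
  have ham : |x - h - x| ≤ h := by
    rw [show x - h - x = -h by ring, abs_neg, abs_of_pos h0]
  have E1 := TX y (by simpa using h0.le)
  rw [← ha2, ← ha4] at E1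
  have E2 := TY x (by simpa using h0.le)
  rw [← hb2, ← hb4] at E2
  have E3 : |u (x + h) (y + h) + u (x + h) (y - h) + u (x - h) (y + h) + u (x - h) (y - h)
      - 2 * (u (x + h) y + u (x - h) y + u x (y + h) + u x (y - h)) + 4 * u x y
      - h ^ 4 * qyx| ≤ (2 * M3 + M4 / 6 + 8 * M1) * h ^ 6 := by
    have r0 := TX y (by simpa using h0.le)
    rw [← ha2, ← ha4] at r0
    have rp := TX (y + h) hbp
    have rm := TX (y - h) hbm
    have l1 := abs_le.mp rp
    have l2 := abs_le.mp r0
    have l3 := abs_le.mp rm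
    have l4 := abs_le.mp T4
    have l5 := abs_le.mp T5
    have m4a := mul_le_mul_of_nonneg_left l4.2 (le_of_lt (pow_pos h0 2))
    have m4b := mul_le_mul_of_nonneg_left l4.1 (le_of_lt (pow_pos h0 2))
    have m5a := mul_le_mul_of_nonneg_left l5.2 (by positivity : (0:ℝ) ≤ h ^ 4 / 12)
    have m5b := mul_le_mul_of_nonneg_left l5.1 (by positivity : (0:ℝ) ≤ h ^ 4 / 12)
    rw [abs_le]
    constructor
    · linarith [l1.1, l2.2, l3.1, m4b, m5b]
    · linarith [l1.2, l2.1, l3.2, m4a, m5a]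
  have E4 : |u (x + h) (y + h) + u (x + h) (y - h) + u (x - h) (y + h) + u (x - h) (y - h)
      - 2 * (u (x + h) y + u (x - h) y + u x (y + h) + u x (y - h)) + 4 * u x y
      - h ^ 4 * qxy| ≤ (2 * M5 + M6 / 6 + 8 * M2) * h ^ 6 := by
    have r0 := TY x (by simpa using h0.le)
    rw [← hb2, ← hb4] at r0
    have rp := TY (x + h) hap
    have rm := TY (x - h) ham
    have l1 := abs_le.mp rp
    have l2 := abs_le.mp r0
    have l3 := abs_le.mp rm
    have l4 := abs_le.mp T4'
    have l5 := abs_le.mp T5'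
    have m4a := mul_le_mul_of_nonneg_left l4.2 (le_of_lt (pow_pos h0 2))
    have m4b := mul_le_mul_of_nonneg_left l4.1 (le_of_lt (pow_pos h0 2))
    have m5a := mul_le_mul_of_nonneg_left l5.2 (by positivity : (0:ℝ) ≤ h ^ 4 / 12)
    have m5b := mul_le_mul_of_nonneg_left l5.1 (by positivity : (0:ℝ) ≤ h ^ 4 / 12)
    rw [abs_le]
    constructor
    · linarith [l1.1, l2.2, l3.1, m4b, m5b]
    · linarith [l1.2, l2.1, l3.2, m4a, m5a]
  have E5 := T6
  rw [hp1, hp0] at E5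
  have E6 := T7
  rw [hp2, hp0] at E6
  rw [hp0]
  have hkey : 1 / (6 * h ^ 2) *
          (20 * u x y
            - 4 * (u (x + h) y + u (x - h) y + u x (y + h) + u x (y - h))
            - (u (x + h) (y + h) + u (x + h) (y - h)
                + u (x - h) (y + h) + u (x - h) (y - h)))
        - 1 / 12 * (8 * -(a2 + b2) + f (x + h) y + f (x - h) y
            + f x (y + h) + f x (y - h))
      = (-(1 / h ^ 2)) * ((u (x + h) y - 2 * u x y + u (x - h) y - h ^ 2 * a2
            - h ^ 4 / 12 * a4)
          + (u x (y + h) - 2 * u x y + u x (y - h) - h ^ 2 * b2 - h ^ 4 / 12 * b4))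
        + (-(1 / (12 * h ^ 2))) * ((u (x + h) (y + h) + u (x + h) (y - h) + u (x - h) (y + h)
              + u (x - h) (y - h)
            - 2 * (u (x + h) y + u (x - h) y + u x (y + h) + u x (y - h)) + 4 * u x y
            - h ^ 4 * qyx)
          + (u (x + h) (y + h) + u (x + h) (y - h) + u (x - h) (y + h) + u (x - h) (y - h)
            - 2 * (u (x + h) y + u (x - h) y + u x (y + h) + u x (y - h)) + 4 * u x y
            - h ^ 4 * qxy))
        + (-(1 / 12)) * ((f (x + h) y - 2 * -(a2 + b2) + f (x - h) y - h ^ 2 * -(a4 + qxy))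
          + (f x (y + h) - 2 * -(a2 + b2) + f x (y - h) - h ^ 2 * -(qyx + b4))) := by
    field_simp
    ring
  set r1 := u (x + h) y - 2 * u x y + u (x - h) y - h ^ 2 * a2 - h ^ 4 / 12 * a4 with hr1
  set r2 := u x (y + h) - 2 * u x y + u x (y - h) - h ^ 2 * b2 - h ^ 4 / 12 * b4 with hr2
  set r3 := u (x + h) (y + h) + u (x + h) (y - h) + u (x - h) (y + h) + u (x - h) (y - h)
      - 2 * (u (x + h) y + u (x - h) y + u x (y + h) + u x (y - h)) + 4 * u x y
      - h ^ 4 * qyx with hr3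
  set r4 := u (x + h) (y + h) + u (x + h) (y - h) + u (x - h) (y + h) + u (x - h) (y - h)
      - 2 * (u (x + h) y + u (x - h) y + u x (y + h) + u x (y - h)) + 4 * u x y
      - h ^ 4 * qxy with hr4
  set r5 := f (x + h) y - 2 * -(a2 + b2) + f (x - h) y - h ^ 2 * -(a4 + qxy) with hr5
  set r6 := f x (y + h) - 2 * -(a2 + b2) + f x (y - h) - h ^ 2 * -(qyx + b4) with hr6
  rw [hkey]
  have hq1 : |r1 + r2| ≤ 2 * M1 * h ^ 6 + 2 * M2 * h ^ 6 :=
    (abs_add_le r1 r2).trans (add_le_add E1 E2)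
  have hq2 : |r3 + r4| ≤ (2 * M3 + M4 / 6 + 8 * M1) * h ^ 6
      + (2 * M5 + M6 / 6 + 8 * M2) * h ^ 6 :=
    (abs_add_le r3 r4).trans (add_le_add E3 E4)
  have hq3 : |r5 + r6| ≤ 2 * M7 * h ^ 4 + 2 * M8 * h ^ 4 :=
    (abs_add_le r5 r6).trans (add_le_add E5 E6)
  have hpos1 : (0:ℝ) < 1 / h ^ 2 := by positivity
  have hpos2 : (0:ℝ) < 1 / (12 * h ^ 2) := by positivity
  have hpos3 : (0:ℝ) < 1 / (12:ℝ) := by norm_num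
  calc |(-(1 / h ^ 2)) * (r1 + r2) + (-(1 / (12 * h ^ 2))) * (r3 + r4)
        + (-(1 / 12)) * (r5 + r6)|
      ≤ |(-(1 / h ^ 2)) * (r1 + r2) + (-(1 / (12 * h ^ 2))) * (r3 + r4)|
        + |(-(1 / 12)) * (r5 + r6)| := abs_add_le _ _
    _ ≤ |(-(1 / h ^ 2)) * (r1 + r2)| + |(-(1 / (12 * h ^ 2))) * (r3 + r4)|
        + |(-(1 / 12)) * (r5 + r6)| := add_le_add_left (abs_add_le _ _) _
    _ = 1 / h ^ 2 * |r1 + r2| + 1 / (12 * h ^ 2) * |r3 + r4| + 1 / 12 * |r5 + r6| := by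
        rw [abs_mul, abs_mul, abs_mul, abs_neg, abs_neg, abs_neg,
          abs_of_pos hpos1, abs_of_pos hpos2, abs_of_pos hpos3]
    _ ≤ 1 / h ^ 2 * (2 * M1 * h ^ 6 + 2 * M2 * h ^ 6)
        + 1 / (12 * h ^ 2) * ((2 * M3 + M4 / 6 + 8 * M1) * h ^ 6
            + (2 * M5 + M6 / 6 + 8 * M2) * h ^ 6)
        + 1 / 12 * (2 * M7 * h ^ 4 + 2 * M8 * h ^ 4) :=
        add_le_add (add_le_add (mul_le_mul_of_nonneg_left hq1 hpos1.le)
          (mul_le_mul_of_nonneg_left hq2 hpos2.le)) (mul_le_mul_of_nonneg_left hq3 hpos3.le)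
    _ = ((2 * M1 + 2 * M2) + ((2 * M3 + M4 / 6 + 8 * M1) + (2 * M5 + M6 / 6 + 8 * M2)) / 12
        + (2 * M7 + 2 * M8) / 12) * h ^ 4 := by
        field_simp
end
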